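/- arXiv:2303.12919 — 12 statements merged into one kernel-verified Lean document; each statement's English description precedes it below -/
import Mathlib

section
/- Let a, f : ℝ → ℝ be continuous and p-periodic with ∫₀ᵖ a = 0, and μ(t) = exp(∫₀ᵗ a). If ∫₀ᵖ μ(s) f(s) ds = 0, then every solution of x' + a(t)x = f(t) is p-periodic. -/
open intervalIntegral

theorem stmt_2 (p : ℝ) (hp : 0 < p) (a f : ℝ → ℝ) (ha : Continuous a) (hf : Continuous f)
    (hap : ∀ t, a (t + p) = a t) (hfp : ∀ t, f (t + p) = f t)
    (hina : ∫ s in (0:ℝ)..p, a s = 0)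
    (μ : ℝ → ℝ) (hμ : ∀ t, μ t = Real.exp (∫ s in (0:ℝ)..t, a s))
    (hortho : ∫ s in (0:ℝ)..p, μ s * f s = 0) :
    ∀ x : ℝ → ℝ, (∀ t, HasDerivAt x (f t - a t * x t) t) → ∀ t, x (t + p) = x t := by
  have hFderiv : ∀ t : ℝ, HasDerivAt (fun u => ∫ s in (0:ℝ)..u, a s) (a t) t := by
    intro t
    exact intervalIntegral.integral_hasDerivAt_right (ha.intervalIntegrable _ _)
      (ha.stronglyMeasurableAtFilter _ _) ha.continuousAt
  have hμderiv : ∀ t, HasDerivAt μ (a t * μ t) t := by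
    intro t
    have h := (hFderiv t).exp
    have heq : μ = fun u => Real.exp (∫ s in (0:ℝ)..u, a s) := funext hμ
    rw [heq]
    simpa [mul_comm, hμ t] using h
  have hμpos : ∀ t, 0 < μ t := fun t => (hμ t) ▸ Real.exp_pos _
  have hμcont : Continuous μ := by
    have hd : Differentiable ℝ μ := fun t => (hμderiv t).differentiableAt
    exact hd.continuous
  have hμper : ∀ t, μ (t + p) = μ t := by
    intro t
    have hsplit : (∫ s in (0:ℝ)..t, a s) + ∫ s in t..(t+p), a s
        = ∫ s in (0:ℝ)..(t+p), a s :=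
      intervalIntegral.integral_add_adjacent_intervals (ha.intervalIntegrable _ _)
        (ha.intervalIntegrable _ _)
    have haper : Function.Periodic a p := hap
    have h2 : (∫ s in t..(t+p), a s) = ∫ s in (0:ℝ)..p, a s := by
      simpa using haper.intervalIntegral_add_eq t 0
    rw [hμ, hμ, ← hsplit, h2, hina, add_zero]
  intro x hx t
  have hgderiv : ∀ t, HasDerivAt (fun u => μ u * x u) (μ t * f t) t := by
    intro t
    have h := (hμderiv t).mul (hx t)
    exact h.congr_deriv (by ring)
  have hμp : μ p = 1 := by rw [hμ, hina, Real.exp_zero]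
  have hμ0 : μ 0 = 1 := by rw [hμ]; simp
  have hxp0 : x p = x 0 := by
    have hFTC : (∫ s in (0:ℝ)..p, μ s * f s) = μ p * x p - μ 0 * x 0 :=
      intervalIntegral.integral_eq_sub_of_hasDerivAt (fun t _ => hgderiv t)
        ((hμcont.mul hf).intervalIntegrable _ _)
    rw [hortho, hμp, hμ0, one_mul, one_mul] at hFTC
    linarith
  set y : ℝ → ℝ := fun u => x (u + p) - x u with hy
  have hyderiv : ∀ t, HasDerivAt y (-(a t) * y t) t := by
    intro t
    have h1 : HasDerivAt (fun u => x (u + p)) (f (t + p) - a (t + p) * x (t + p)) t := by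
      have := (hx (t + p)).comp t ((hasDerivAt_id t).add_const p)
      simpa [Function.comp_def] using this
    have h := h1.sub (hx t)
    refine h.congr_deriv ?_
    rw [hfp, hap]; simp [hy]; ring
  have hhderiv : ∀ t, HasDerivAt (fun u => μ u * y u) 0 t := by
    intro t
    have h := (hμderiv t).mul (hyderiv t)
    exact h.congr_deriv (by ring)
  have hconst : ∀ s : ℝ, μ s * y s = μ 0 * y 0 := by
    have hdiff : Differentiable ℝ (fun u => μ u * y u) :=
      fun u => (hhderiv u).differentiableAt
    intro s
    exact is_const_of_deriv_eq_zero hdiff (fun u => (hhderiv u).deriv) s 0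
  have hy0 : y 0 = 0 := by simp [hy, hxp0]
  have := hconst t
  rw [hy0, mul_zero] at this
  have hyt : y t = 0 := by
    have := mul_eq_zero.mp this
    rcases this with h | h
    · exact absurd h (ne_of_gt (hμpos t))
    · exact h
  simpa [hy, sub_eq_zero] using hyt
end

section
/- Let M be a real n×n matrix with I - M singular, and b ∈ ℝⁿ not in the range of I - M. Then there exists a nonzero vector v₀ with Mᵀ v₀ = v₀ and ⟨b, v₀⟩ ≠ 0, and consequently for any x₀ ∈ ℝⁿ the sequence x_m = Mᵐ x₀ + Σ_{k=0}^{m-1} Mᵏ b satisfies ⟨x_m, v₀⟩ = ⟨x₀, v₀⟩ + m⟨b, v₀⟩, hence ‖x_m‖ → ∞ as m → ∞. -/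
open Matrix Filter

open RealInnerProductSpace

theorem stmt_4 (n : ℕ) (M : Matrix (Fin n) (Fin n) ℝ) (b : Fin n → ℝ)
    (hsing : ¬ IsUnit ((1 : Matrix (Fin n) (Fin n) ℝ) - M).det)
    (hb : b ∉ Set.range (fun x : Fin n → ℝ => ((1 : Matrix (Fin n) (Fin n) ℝ) - M) *ᵥ x)) :
    ∃ v₀ : Fin n → ℝ, v₀ ≠ 0 ∧ Mᵀ *ᵥ v₀ = v₀ ∧ b ⬝ᵥ v₀ ≠ 0 ∧
      ∀ x₀ : Fin n → ℝ,
        (∀ m : ℕ, ((M ^ m) *ᵥ x₀ + (∑ k ∈ Finset.range m, M ^ k) *ᵥ b) ⬝ᵥ v₀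
            = x₀ ⬝ᵥ v₀ + (m : ℝ) * (b ⬝ᵥ v₀)) ∧
        Tendsto (fun m : ℕ => ‖(M ^ m) *ᵥ x₀ + (∑ k ∈ Finset.range m, M ^ k) *ᵥ b‖)
          atTop atTop := by
  classical
  set A : Matrix (Fin n) (Fin n) ℝ := 1 - M with hA
  -- Step 1: find v₀ orthogonal to range of A with b ⬝ᵥ v₀ ≠ 0
  obtain ⟨v₀, hAv, hbv⟩ :
      ∃ v₀ : Fin n → ℝ, (∀ x, (A *ᵥ x) ⬝ᵥ v₀ = 0) ∧ b ⬝ᵥ v₀ ≠ 0 := by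
    let e : (Fin n → ℝ) ≃ₗ[ℝ] EuclideanSpace ℝ (Fin n) :=
      (WithLp.linearEquiv 2 ℝ (Fin n → ℝ)).symm
    let S : Submodule ℝ (EuclideanSpace ℝ (Fin n)) :=
      Submodule.map (e : (Fin n → ℝ) →ₗ[ℝ] EuclideanSpace ℝ (Fin n)) (LinearMap.range (Matrix.mulVecLin A))
    have hbS : e b ∉ S := by
      intro h
      obtain ⟨y, ⟨x, hx⟩, hy⟩ := h
      exact hb ⟨x, by simpa [← hx] using e.injective hy⟩
    by_contra h
    push_neg at h
    apply hbS
    rw [← Submodule.orthogonal_orthogonal S, Submodule.mem_orthogonal]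
    intro v hv
    obtain ⟨w, hw⟩ : ∃ w : Fin n → ℝ, e w = v := ⟨e.symm v, by simp⟩
    have key : ∀ u : Fin n → ℝ, ⟪v, e u⟫ = u ⬝ᵥ w := by
      intro u
      have h1 : ⟪e w, e u⟫ = w ⬝ᵥ u := by
        exact (EuclideanSpace.inner_toLp_toLp (𝕜 := ℝ) w u).trans (dotProduct_comm u w)
      rw [← hw, h1, dotProduct_comm]
    have hv' : ∀ x : Fin n → ℝ, (A *ᵥ x) ⬝ᵥ w = 0 := by
      intro x
      have := hv (e (A *ᵥ x)) ⟨A *ᵥ x, ⟨x, rfl⟩, rfl⟩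
      rwa [real_inner_comm, key] at this
    rw [key]
    exact h w hv'
  -- Step 2: invariance of dot product with v₀ under M
  have hM : ∀ y : Fin n → ℝ, (M *ᵥ y) ⬝ᵥ v₀ = y ⬝ᵥ v₀ := by
    intro y
    have := hAv y
    rw [hA, sub_mulVec, one_mulVec, sub_dotProduct] at this
    linarith
  have hMT : Mᵀ *ᵥ v₀ = v₀ := by
    apply dotProduct_eq
    intro u
    rw [dotProduct_comm, Matrix.dotProduct_mulVec, Matrix.vecMul_transpose, hM u, dotProduct_comm]
  have hv0 : v₀ ≠ 0 := by
    intro h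
    apply hbv
    simp [h]
  -- powers preserve the dot product
  have hpow : ∀ (m : ℕ) (y : Fin n → ℝ), ((M ^ m) *ᵥ y) ⬝ᵥ v₀ = y ⬝ᵥ v₀ := by
    intro m
    induction m with
    | zero => intro y; simp
    | succ m ih =>
      intro y
      rw [pow_succ, ← Matrix.mulVec_mulVec, ih, hM]
  refine ⟨v₀, hv0, hMT, hbv, fun x₀ => ?_⟩
  set c : ℝ := x₀ ⬝ᵥ v₀ with hc
  set d : ℝ := b ⬝ᵥ v₀ with hd
  have hseq : ∀ m : ℕ, ((M ^ m) *ᵥ x₀ + (∑ k ∈ Finset.range m, M ^ k) *ᵥ b) ⬝ᵥ v₀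
      = c + (m : ℝ) * d := by
    intro m
    rw [add_dotProduct, hpow m x₀]
    congr 1
    induction m with
    | zero => simp
    | succ m ih =>
      rw [Finset.sum_range_succ, Matrix.add_mulVec, add_dotProduct, ih, hpow m b]
      push_cast
      ring
  refine ⟨hseq, ?_⟩
  -- the growth estimate
  set C : ℝ := ∑ i, |v₀ i| with hC
  have hCpos : 0 < C := by
    obtain ⟨i, hi⟩ : ∃ i, v₀ i ≠ 0 := by
      by_contra hcon
      push_neg at hcon
      exact hv0 (funext hcon)
    exact Finset.sum_pos' (fun j _ => abs_nonneg _)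
      ⟨i, Finset.mem_univ i, abs_pos.2 hi⟩
  have hbound : ∀ z : Fin n → ℝ, |z ⬝ᵥ v₀| ≤ ‖z‖ * C := by
    intro z
    calc |z ⬝ᵥ v₀| ≤ ∑ i, |z i * v₀ i| := Finset.abs_sum_le_sum_abs _ _
      _ ≤ ∑ i, ‖z‖ * |v₀ i| := by
          refine Finset.sum_le_sum fun i _ => ?_
          rw [abs_mul]
          exact mul_le_mul_of_nonneg_right
            (by simpa using norm_le_pi_norm z i) (abs_nonneg _)
      _ = ‖z‖ * C := by rw [← Finset.mul_sum]
  have hdpos : 0 < |d| := abs_pos.2 hbv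
  have hlow : ∀ m : ℕ, ((m : ℝ) * |d| - |c|) / C
      ≤ ‖(M ^ m) *ᵥ x₀ + (∑ k ∈ Finset.range m, M ^ k) *ᵥ b‖ := by
    intro m
    rw [div_le_iff₀ hCpos]
    have h1 := hbound ((M ^ m) *ᵥ x₀ + (∑ k ∈ Finset.range m, M ^ k) *ᵥ b)
    rw [hseq m] at h1
    have h2 : (m : ℝ) * |d| - |c| ≤ |c + (m : ℝ) * d| := by
      have := abs_sub_abs_le_abs_sub ((m : ℝ) * d) (-c)
      rw [abs_mul, Nat.abs_cast, abs_neg, sub_neg_eq_add, add_comm] at this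
      linarith
    linarith
  refine tendsto_atTop_mono hlow ?_
  have h3 : Tendsto (fun m : ℕ => (m : ℝ) * |d|) atTop atTop :=
    (tendsto_natCast_atTop_atTop).atTop_mul_const hdpos
  have h4 : Tendsto (fun m : ℕ => (m : ℝ) * |d| - |c|) atTop atTop :=
    tendsto_atTop_add_const_right _ (-|c|) h3
  exact h4.atTop_div_const hCpos
end

section
/- Let M be a real n×n matrix that is diagonalizable over ℂ, all of whose eigenvalues λ satisfy |λ| ≤ 1, and with λ = 1 the only eigenvalue on the unit circle. If b ∈ ℝⁿ lies in the range of I - M, then for every x₀ ∈ ℝⁿ, the sequence x_m = Mᵐ x₀ + Σ_{k=0}^{m-1} Mᵏ b converges as m → ∞ to a vector of the form x̄₀ + y, where (I - M)x̄₀ = b and My = y. -/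
open Matrix Filter Polynomial

lemma aux_conj_pow {n : ℕ} (P A : Matrix (Fin n) (Fin n) ℂ) (hP : IsUnit P.det) (m : ℕ) :
    (P * A * P⁻¹) ^ m = P * A ^ m * P⁻¹ := by
  induction m with
  | zero => simp [Matrix.mul_nonsing_inv P hP]
  | succ k ih =>
      rw [pow_succ, ih, pow_succ]
      calc P * A ^ k * P⁻¹ * (P * A * P⁻¹)
          = P * A ^ k * (P⁻¹ * (P * (A * P⁻¹))) := by
            simp only [Matrix.mul_assoc]
        _ = P * A ^ k * (A * P⁻¹) := by
            rw [Matrix.nonsing_inv_mul_cancel_left _ _ hP]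
        _ = P * (A ^ k * A) * P⁻¹ := by simp only [Matrix.mul_assoc]

lemma aux_eval_charpoly {n : ℕ} (A : Matrix (Fin n) (Fin n) ℂ) (μ : ℂ) :
    A.charpoly.eval μ = (Matrix.diagonal (fun _ => μ) - A).det := by
  rw [Matrix.charpoly, ← Polynomial.coe_evalRingHom, RingHom.map_det]
  congr 1
  ext i j
  by_cases h : i = j
  · subst h
    simp [Matrix.charmatrix_apply_eq, Matrix.map_apply]
  · simp [Matrix.charmatrix_apply_ne _ _ _ h, Matrix.map_apply,
      Matrix.diagonal_apply_ne _ h]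

theorem stmt_7 (n : ℕ) (M : Matrix (Fin n) (Fin n) ℝ)
    (hdiag : ∃ (P : Matrix (Fin n) (Fin n) ℂ) (D : Fin n → ℂ),
      IsUnit P.det ∧ M.map (algebraMap ℝ ℂ) = P * Matrix.diagonal D * P⁻¹)
    (hle : ∀ lam : ℂ, ((M.map (algebraMap ℝ ℂ)).charpoly).IsRoot lam → ‖lam‖ ≤ 1)
    (hone : ∀ lam : ℂ, ((M.map (algebraMap ℝ ℂ)).charpoly).IsRoot lam →
      ‖lam‖ = 1 → lam = 1)
    (b : Fin n → ℝ)
    (hb : b ∈ Set.range (fun x : Fin n → ℝ => ((1 : Matrix (Fin n) (Fin n) ℝ) - M) *ᵥ x)) :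
    ∀ x₀ : Fin n → ℝ, ∃ xbar y : Fin n → ℝ,
      ((1 : Matrix (Fin n) (Fin n) ℝ) - M) *ᵥ xbar = b ∧ M *ᵥ y = y ∧
      Tendsto (fun m : ℕ => (M ^ m) *ᵥ x₀ + (∑ k ∈ Finset.range m, M ^ k) *ᵥ b)
        atTop (nhds (xbar + y)) := by
  obtain ⟨P, D, hP, hM⟩ := hdiag
  obtain ⟨xbar, hxbar⟩ := hb
  intro x₀
  set Mc : Matrix (Fin n) (Fin n) ℂ := M.map (algebraMap ℝ ℂ) with hMc
  have hPu : IsUnit P := (Matrix.isUnit_iff_isUnit_det P).mpr hP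
  -- each D i is a root of the charpoly of Mc
  have hroot : ∀ i, Mc.charpoly.IsRoot (D i) := by
    intro i
    show Mc.charpoly.eval (D i) = 0
    rw [aux_eval_charpoly, hM]
    have h1 : P * Matrix.diagonal (fun _ : Fin n => D i) * P⁻¹
        = Matrix.diagonal (fun _ : Fin n => D i) := by
      rw [← Matrix.smul_one_eq_diagonal]
      rw [Matrix.mul_smul, Matrix.mul_one, Matrix.smul_mul, Matrix.mul_nonsing_inv _ hP]
    have key : Matrix.diagonal (fun _ => D i) - P * Matrix.diagonal D * P⁻¹
        = P * (Matrix.diagonal (fun _ => D i) - Matrix.diagonal D) * P⁻¹ := by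
      rw [Matrix.mul_sub, Matrix.sub_mul, h1]
    rw [key, Matrix.det_conj hPu, Matrix.diagonal_sub, Matrix.det_diagonal]
    exact Finset.prod_eq_zero (Finset.mem_univ i) (by simp)
  -- limiting diagonal entries
  set e : Fin n → ℂ := fun i => if D i = 1 then 1 else 0 with he
  have hDe : ∀ i, D i * e i = e i := by
    intro i
    by_cases h : D i = 1 <;> simp [he, h]
  have htendsto_e : ∀ i, Tendsto (fun m : ℕ => D i ^ m) atTop (nhds (e i)) := by
    intro i
    by_cases h : D i = 1
    · simp only [he, h, if_pos rfl, one_pow]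
      exact tendsto_const_nhds
    · have h1 : ‖D i‖ ≤ 1 := hle _ (hroot i)
      have h2 : ‖D i‖ < 1 :=
        lt_of_le_of_ne h1 (fun heq => h (hone _ (hroot i) heq))
      simpa [he, h] using
        tendsto_pow_atTop_nhds_zero_of_norm_lt_one (x := D i) (by simpa using h2)
  -- limit matrix over ℂ
  set Q : Matrix (Fin n) (Fin n) ℂ := P * Matrix.diagonal e * P⁻¹ with hQ
  have hMc_pow : ∀ m : ℕ, Mc ^ m = P * Matrix.diagonal (fun i => D i ^ m) * P⁻¹ := by
    intro m
    rw [hM, aux_conj_pow P _ hP, Matrix.diagonal_pow]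
    rfl
  have hMcQ : Mc * Q = Q := by
    rw [hM, hQ]
    calc P * Matrix.diagonal D * P⁻¹ * (P * Matrix.diagonal e * P⁻¹)
        = P * Matrix.diagonal D * (P⁻¹ * (P * (Matrix.diagonal e * P⁻¹))) := by
          simp only [Matrix.mul_assoc]
      _ = P * Matrix.diagonal D * (Matrix.diagonal e * P⁻¹) := by
          rw [Matrix.nonsing_inv_mul_cancel_left _ _ hP]
      _ = P * (Matrix.diagonal D * Matrix.diagonal e) * P⁻¹ := by
          simp only [Matrix.mul_assoc]
      _ = P * Matrix.diagonal e * P⁻¹ := by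
          rw [Matrix.diagonal_mul_diagonal]
          simp only [hDe]
  have hQtendsto : Tendsto (fun m : ℕ => Mc ^ m) atTop (nhds Q) := by
    have hcont : Continuous (fun d : Fin n → ℂ => P * Matrix.diagonal d * P⁻¹) :=
      (continuous_const.matrix_mul continuous_id.matrix_diagonal).matrix_mul continuous_const
    have hd : Tendsto (fun m : ℕ => fun i => D i ^ m) atTop (nhds e) := by
      rw [tendsto_pi_nhds]
      exact htendsto_e
    have := (hcont.tendsto e).comp hd
    simpa only [Function.comp_def, hMc_pow, hQ] using this
  -- relate real and complex mulVec
  have hmap : ∀ (A : Matrix (Fin n) (Fin n) ℝ) (w : Fin n → ℝ) (i : Fin n),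
      ((A.map (algebraMap ℝ ℂ)) *ᵥ (fun j => (w j : ℂ))) i = (((A *ᵥ w) i : ℝ) : ℂ) := by
    intro A w i
    simp only [Matrix.mulVec, dotProduct, Matrix.map_apply]
    push_cast
    rfl
  have hpowmap : ∀ m : ℕ, (M ^ m).map (algebraMap ℝ ℂ) = Mc ^ m := by
    intro m
    rw [hMc]
    exact map_pow (RingHom.mapMatrix (algebraMap ℝ ℂ)) M m
  -- define the limit
  set v : Fin n → ℝ := x₀ - xbar with hv
  set vc : Fin n → ℂ := fun j => (v j : ℂ) with hvc
  set L : Fin n → ℂ := Q *ᵥ vc with hL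
  set y : Fin n → ℝ := fun i => (L i).re with hy
  have hLtendsto : Tendsto (fun m : ℕ => (M ^ m) *ᵥ v) atTop (nhds y) := by
    rw [tendsto_pi_nhds]
    intro i
    have hcont : Continuous (fun A : Matrix (Fin n) (Fin n) ℂ => (A *ᵥ vc) i) :=
      (continuous_apply i).comp (continuous_id.matrix_mulVec continuous_const)
    have h1 : Tendsto (fun m : ℕ => ((Mc ^ m) *ᵥ vc) i) atTop (nhds (L i)) := by
      have := (hcont.tendsto Q).comp hQtendsto
      simpa only [Function.comp_def, hL] using this
    have h2 : ∀ m : ℕ, ((Mc ^ m) *ᵥ vc) i = ((((M ^ m) *ᵥ v) i : ℝ) : ℂ) := by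
      intro m
      rw [← hpowmap m]
      exact hmap _ _ _
    have h3 : Tendsto (fun m : ℕ => ((((M ^ m) *ᵥ v) i : ℝ) : ℂ)) atTop (nhds (L i)) := by
      simpa only [h2] using h1
    have := (Complex.continuous_re.tendsto (L i)).comp h3
    simpa only [Function.comp_def, Complex.ofReal_re, hy] using this
  -- M *ᵥ y = y
  have hMy : M *ᵥ y = y := by
    have hMcL : Mc *ᵥ L = L := by
      rw [hL, Matrix.mulVec_mulVec, hMcQ]
    funext i
    have hLi : (Mc *ᵥ L) i = L i := congrFun hMcL i
    calc (M *ᵥ y) i = ∑ j, M i j * (L j).re := rfl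
      _ = (∑ j, (M i j : ℂ) * L j).re := by
          rw [Complex.re_sum]
          exact Finset.sum_congr rfl fun j _ => (Complex.re_ofReal_mul _ _).symm
      _ = ((Mc *ᵥ L) i).re := by congr 1
      _ = (L i).re := by rw [hLi]
      _ = y i := rfl
  -- algebraic identity for the partial sums
  have hsum : ∀ m : ℕ, (∑ k ∈ Finset.range m, M ^ k) * ((1 : Matrix (Fin n) (Fin n) ℝ) - M)
      = 1 - M ^ m := by
    intro m
    rw [← neg_sub M (1 : Matrix (Fin n) (Fin n) ℝ), mul_neg, geom_sum_mul, neg_sub]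
  have hrw : ∀ m : ℕ, (M ^ m) *ᵥ x₀ + (∑ k ∈ Finset.range m, M ^ k) *ᵥ b
      = xbar + (M ^ m) *ᵥ v := by
    intro m
    rw [← hxbar]
    show (M ^ m) *ᵥ x₀ + (∑ k ∈ Finset.range m, M ^ k) *ᵥ
        (((1 : Matrix (Fin n) (Fin n) ℝ) - M) *ᵥ xbar) = _
    rw [Matrix.mulVec_mulVec, hsum m, Matrix.sub_mulVec, Matrix.one_mulVec, hv,
      Matrix.mulVec_sub]
    abel
  refine ⟨xbar, y, hxbar, hMy, ?_⟩
  have hfinal : Tendsto (fun m : ℕ => xbar + (M ^ m) *ᵥ v) atTop (nhds (xbar + y)) :=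
    tendsto_const_nhds.add hLtendsto
  simpa only [hrw] using hfinal
end

section
/- Let M be a real n×n matrix diagonalizable over ℂ with all eigenvalues λ satisfying |λ| ≤ 1, and b ∈ ℝⁿ in the range of I - M. Then for every x₀ ∈ ℝⁿ the sequence x_m = Mᵐ x₀ + Σ_{k=0}^{m-1} Mᵏ b is bounded. -/
open Matrix

theorem stmt_8 (n : ℕ) (M : Matrix (Fin n) (Fin n) ℝ)
    (hdiag : ∃ (P : Matrix (Fin n) (Fin n) ℂ) (D : Fin n → ℂ),
      IsUnit P.det ∧ M.map (algebraMap ℝ ℂ) = P * Matrix.diagonal D * P⁻¹)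
    (hle : ∀ lam : ℂ, ((M.map (algebraMap ℝ ℂ)).charpoly).IsRoot lam → ‖lam‖ ≤ 1)
    (b : Fin n → ℝ)
    (hb : b ∈ Set.range (fun x : Fin n → ℝ => ((1 : Matrix (Fin n) (Fin n) ℝ) - M) *ᵥ x)) :
    ∀ x₀ : Fin n → ℝ, ∃ C : ℝ, ∀ m : ℕ,
      ‖(M ^ m) *ᵥ x₀ + (∑ k ∈ Finset.range m, M ^ k) *ᵥ b‖ ≤ C := by
  obtain ⟨P, D, hP, hM⟩ := hdiag
  obtain ⟨y, hy⟩ := hb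
  intro x₀
  set M' := M.map (algebraMap ℝ ℂ) with hM'
  -- eigenvalues: each D i is a root of charpoly of M'
  have hPu : IsUnit P := (Matrix.isUnit_iff_isUnit_det P).mpr hP
  have keval : ∀ lam : ℂ, (M'.charpoly).eval lam =
      (Matrix.diagonal (fun _ : Fin n => lam) - M').det := by
    intro lam
    rw [Matrix.charpoly, ← Polynomial.coe_evalRingHom, RingHom.map_det]
    congr 1
    ext i j
    by_cases h : i = j <;>
      simp [Matrix.charmatrix_apply, Matrix.diagonal_apply, h, Matrix.sub_apply]
  have hD : ∀ i, ‖D i‖ ≤ 1 := by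
    intro i
    apply hle
    rw [Polynomial.IsRoot, keval]
    have h1 : Matrix.diagonal (fun _ : Fin n => D i) - M' =
        P * Matrix.diagonal (fun j => D i - D j) * P⁻¹ := by
      have hc : Matrix.diagonal (fun _ : Fin n => D i) = (D i) • (1 : Matrix (Fin n) (Fin n) ℂ) := by
        rw [Matrix.smul_one_eq_diagonal]
      rw [hM, hc]
      have : Matrix.diagonal (fun j => D i - D j) =
          (D i) • (1 : Matrix (Fin n) (Fin n) ℂ) - Matrix.diagonal D := by
        rw [Matrix.smul_one_eq_diagonal, Matrix.diagonal_sub]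
      rw [this, Matrix.mul_sub, Matrix.sub_mul]
      congr 1
      rw [Matrix.mul_smul, Matrix.smul_mul, Matrix.mul_one, Matrix.mul_nonsing_inv _ hP]
    rw [h1, Matrix.det_conj hPu, Matrix.det_diagonal]
    exact Finset.prod_eq_zero (Finset.mem_univ i) (sub_self _)
  -- powers
  have hpow : ∀ m : ℕ, M' ^ m = P * Matrix.diagonal (fun i => D i ^ m) * P⁻¹ := by
    intro m
    induction m with
    | zero => simp [Matrix.mul_nonsing_inv _ hP]
    | succ m ih =>
        rw [pow_succ, ih, hM]
        have h3 : (P * Matrix.diagonal fun i => D i ^ m) * P⁻¹ * (P * Matrix.diagonal D * P⁻¹) =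
            P * ((Matrix.diagonal fun i => D i ^ m) * (P⁻¹ * P) * Matrix.diagonal D) * P⁻¹ := by
          noncomm_ring
        rw [h3, Matrix.nonsing_inv_mul _ hP, Matrix.mul_one, Matrix.diagonal_mul_diagonal]
        simp [pow_succ, Matrix.mul_assoc]
  have hmap : ∀ m : ℕ, (M ^ m).map (algebraMap ℝ ℂ) = M' ^ m := by
    intro m
    simpa [hM'] using map_pow ((algebraMap ℝ ℂ).mapMatrix) M m
  -- entry bound
  have hentry : ∀ (m : ℕ) (i j : Fin n), |(M ^ m) i j| ≤
      ∑ k, ‖P i k‖ * ‖P⁻¹ k j‖ := by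
    intro m i j
    have h2 : (algebraMap ℝ ℂ) ((M ^ m) i j) = (M' ^ m) i j := by
      rw [← hmap m]; rfl
    rw [← Real.norm_eq_abs, ← Complex.norm_real]
    show ‖(algebraMap ℝ ℂ) ((M ^ m) i j)‖ ≤ _
    rw [h2, hpow m]
    rw [Matrix.mul_apply]
    refine le_trans (norm_sum_le _ _) (Finset.sum_le_sum fun k _ => ?_)
    rw [Matrix.mul_diagonal, norm_mul, norm_mul, norm_pow]
    calc ‖P i k‖ * ‖D k‖ ^ m * ‖P⁻¹ k j‖
        ≤ ‖P i k‖ * 1 * ‖P⁻¹ k j‖ := by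
          gcongr
          exact pow_le_one₀ (norm_nonneg _) (hD k)
      _ = ‖P i k‖ * ‖P⁻¹ k j‖ := by ring
  set K : ℝ := ∑ i, ∑ j, ∑ k, ‖P i k‖ * ‖P⁻¹ k j‖ with hK
  have hKnonneg : 0 ≤ K :=
    Finset.sum_nonneg fun i _ => Finset.sum_nonneg fun j _ => Finset.sum_nonneg fun k _ =>
      mul_nonneg (norm_nonneg _) (norm_nonneg _)
  have hbound : ∀ (m : ℕ) (v : Fin n → ℝ), ‖(M ^ m) *ᵥ v‖ ≤ K * ‖v‖ := by
    intro m v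
    have hC : 0 ≤ K * ‖v‖ := mul_nonneg hKnonneg (norm_nonneg _)
    rw [pi_norm_le_iff_of_nonneg hC]
    intro i
    rw [Real.norm_eq_abs, Matrix.mulVec, dotProduct]
    calc |∑ j, (M ^ m) i j * v j| ≤ ∑ j, |(M ^ m) i j * v j| :=
          Finset.abs_sum_le_sum_abs _ _
      _ ≤ ∑ j, (∑ k, ‖P i k‖ * ‖P⁻¹ k j‖) * ‖v‖ := by
          refine Finset.sum_le_sum fun j _ => ?_
          rw [abs_mul]
          have h1 := hentry m i j
          have h2 : |v j| ≤ ‖v‖ := by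
            simpa [Real.norm_eq_abs] using norm_le_pi_norm v j
          exact mul_le_mul h1 h2 (abs_nonneg _)
            (Finset.sum_nonneg fun k _ => mul_nonneg (norm_nonneg _) (norm_nonneg _))
      _ = (∑ j, ∑ k, ‖P i k‖ * ‖P⁻¹ k j‖) * ‖v‖ := by
          rw [Finset.sum_mul]
      _ ≤ K * ‖v‖ := by
          apply mul_le_mul_of_nonneg_right _ (norm_nonneg _)
          exact Finset.single_le_sum (f := fun i =>
              ∑ j, ∑ k, ‖P i k‖ * ‖P⁻¹ k j‖)
            (fun i _ => Finset.sum_nonneg fun j _ => Finset.sum_nonneg fun k _ =>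
              mul_nonneg (norm_nonneg _) (norm_nonneg _))
            (Finset.mem_univ i)
  -- telescoping
  refine ⟨K * ‖x₀ - y‖ + ‖y‖, fun m => ?_⟩
  have hgeo : (∑ k ∈ Finset.range m, M ^ k) * (1 - M) = 1 - M ^ m := by
    have h := geom_sum_mul M m
    calc (∑ k ∈ Finset.range m, M ^ k) * (1 - M)
        = -((∑ k ∈ Finset.range m, M ^ k) * (M - 1)) := by noncomm_ring
      _ = -(M ^ m - 1) := by rw [h]
      _ = 1 - M ^ m := by noncomm_ring
  have hx : (M ^ m) *ᵥ x₀ + (∑ k ∈ Finset.range m, M ^ k) *ᵥ b =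
      (M ^ m) *ᵥ (x₀ - y) + y := by
    rw [← hy]
    show _ + (∑ k ∈ Finset.range m, M ^ k) *ᵥ ((1 - M) *ᵥ y) = _
    rw [Matrix.mulVec_mulVec, hgeo, Matrix.sub_mulVec, Matrix.one_mulVec,
      Matrix.mulVec_sub]
    abel
  rw [hx]
  calc ‖(M ^ m) *ᵥ (x₀ - y) + y‖ ≤ ‖(M ^ m) *ᵥ (x₀ - y)‖ + ‖y‖ := norm_add_le _ _
    _ ≤ K * ‖x₀ - y‖ + ‖y‖ := by
        have := hbound m (x₀ - y)
        linarith
end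

section
/- Let g : ℝ → ℝ be continuous with finite limits g(-∞) = lim_{x→-∞} g(x) and g(∞) = lim_{x→∞} g(x), and g(-∞) < g(x) < g(∞) for all x. Let a, f be continuous p-periodic with ∫₀ᵖ a = 0 and μ(t) = exp(∫₀ᵗ a). If x is a p-periodic solution of x' + a(t)x + g(x) = f(t), then g(-∞)∫₀ᵖ μ < ∫₀ᵖ μ f < g(∞)∫₀ᵖ μ. -/
open intervalIntegral Filter

theorem stmt_9 (p : ℝ) (hp : 0 < p) (a f g : ℝ → ℝ)
    (ha : Continuous a) (hf : Continuous f) (hg : Continuous g)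
    (hap : ∀ t, a (t + p) = a t) (hfp : ∀ t, f (t + p) = f t)
    (hina : ∫ s in (0:ℝ)..p, a s = 0)
    (μ : ℝ → ℝ) (hμ : ∀ t, μ t = Real.exp (∫ s in (0:ℝ)..t, a s))
    (gm gp : ℝ) (hgm : Tendsto g atBot (nhds gm)) (hgp : Tendsto g atTop (nhds gp))
    (hgb : ∀ x : ℝ, gm < g x ∧ g x < gp)
    (x : ℝ → ℝ) (hx : ∀ t, HasDerivAt x (f t - a t * x t - g (x t)) t)
    (hxp : ∀ t, x (t + p) = x t) :
    gm * ∫ t in (0:ℝ)..p, μ t < ∫ t in (0:ℝ)..p, μ t * f t ∧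
    (∫ t in (0:ℝ)..p, μ t * f t) < gp * ∫ t in (0:ℝ)..p, μ t := by
  have hμe : μ = fun t => Real.exp (∫ s in (0:ℝ)..t, a s) := funext hμ
  subst hμe
  set F : ℝ → ℝ := fun t => ∫ s in (0:ℝ)..t, a s with hF
  have hFd : ∀ t, HasDerivAt F (a t) t := by
    intro t
    exact intervalIntegral.integral_hasDerivAt_right (ha.intervalIntegrable _ _)
      (ha.stronglyMeasurableAtFilter _ _) ha.continuousAt
  have hμd : ∀ t, HasDerivAt (fun t => Real.exp (F t)) (Real.exp (F t) * a t) t :=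
    fun t => (hFd t).exp
  have hμc : Continuous fun t => Real.exp (F t) :=
    continuous_iff_continuousAt.2 fun t => (hμd t).continuousAt
  have hxc : Continuous x := continuous_iff_continuousAt.2 fun t => (hx t).continuousAt
  have hμpos : ∀ t, 0 < Real.exp (F t) := fun t => Real.exp_pos _
  have hμp : Real.exp (F p) = 1 := by simp [hF, hina]
  have hμ0 : Real.exp (F 0) = 1 := by simp [hF]
  have hxp0 : x p = x 0 := by simpa using hxp 0
  -- derivative of μ * x
  have hprod : ∀ t, HasDerivAt (fun t => Real.exp (F t) * x t)
      (Real.exp (F t) * f t - Real.exp (F t) * g (x t)) t := by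
    intro t
    have := (hμd t).mul (hx t)
    refine this.congr_deriv ?_
    ring
  have hcont1 : Continuous fun t => Real.exp (F t) * f t := hμc.mul hf
  have hcont2 : Continuous fun t => Real.exp (F t) * g (x t) := hμc.mul (hg.comp hxc)
  have hint : ∫ t in (0:ℝ)..p, (Real.exp (F t) * f t - Real.exp (F t) * g (x t))
      = Real.exp (F p) * x p - Real.exp (F 0) * x 0 := by
    exact intervalIntegral.integral_eq_sub_of_hasDerivAt (fun t _ => hprod t)
      ((hcont1.sub hcont2).intervalIntegrable _ _)
  rw [hμp, hμ0, hxp0] at hint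
  simp only [one_mul, sub_self] at hint
  rw [intervalIntegral.integral_sub (hcont1.intervalIntegrable _ _)
    (hcont2.intervalIntegrable _ _), sub_eq_zero] at hint
  constructor
  · rw [hint]
    have hpos : 0 < ∫ t in (0:ℝ)..p, (Real.exp (F t) * g (x t) - gm * Real.exp (F t)) := by
      apply intervalIntegral.intervalIntegral_pos_of_pos_on
        ((hcont2.sub (continuous_const.mul hμc)).intervalIntegrable _ _)
      · intro t _
        have := (hgb (x t)).1
        show 0 < Real.exp (F t) * g (x t) - gm * Real.exp (F t)
        nlinarith [hμpos t]
      · exact hp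
    rw [intervalIntegral.integral_sub (hcont2.intervalIntegrable _ _)
      ((show Continuous fun t => gm * Real.exp (F t) from continuous_const.mul hμc).intervalIntegrable _ _),
      intervalIntegral.integral_const_mul] at hpos
    linarith
  · rw [hint]
    have hpos : 0 < ∫ t in (0:ℝ)..p, (gp * Real.exp (F t) - Real.exp (F t) * g (x t)) := by
      apply intervalIntegral.intervalIntegral_pos_of_pos_on
        (((continuous_const.mul hμc).sub hcont2).intervalIntegrable _ _)
      · intro t _
        have := (hgb (x t)).2
        show 0 < gp * Real.exp (F t) - Real.exp (F t) * g (x t)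
        nlinarith [hμpos t]
      · exact hp
    rw [intervalIntegral.integral_sub ((show Continuous fun t => gp * Real.exp (F t) from continuous_const.mul hμc).intervalIntegrable _ _)
      (hcont2.intervalIntegrable _ _),
      intervalIntegral.integral_const_mul] at hpos
    linarith
end

section
/- Under the assumptions ∫₀ᵖ a = 0, g(-∞) < g(x) < g(∞) for all x, and g(-∞)∫₀ᵖ μ < ∫₀ᵖ μ f < g(∞)∫₀ᵖ μ (with μ(t) = exp(∫₀ᵗ a)), the equation x' + a(t)x + g(x) = f(t) has a p-periodic solution. -/
open intervalIntegral Filter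

open Set in
private lemma per_bdd' {p : ℝ} (hp : 0 < p) {h : ℝ → ℝ} (hc : Continuous h)
    (hper : Function.Periodic h p) :
    ∃ t1 t2 : ℝ, ∀ t, h t1 ≤ h t ∧ h t ≤ h t2 := by
  have hne : (Icc (0:ℝ) p).Nonempty := ⟨0, by simp [hp.le]⟩
  obtain ⟨t1, _, h1⟩ := isCompact_Icc.exists_isMinOn hne hc.continuousOn
  obtain ⟨t2, _, h2⟩ := isCompact_Icc.exists_isMaxOn hne hc.continuousOn
  refine ⟨t1, t2, fun t => ?_⟩
  obtain ⟨y, hy, hty⟩ := hper.exists_mem_Ico₀ hp t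
  rw [hty]
  exact ⟨h1 (Ico_subset_Icc_self hy), h2 (Ico_subset_Icc_self hy)⟩

open Set in
private lemma clamp_lip' {g : ℝ → ℝ} (hg : ContDiff ℝ 1 g) (N : ℝ) (hN : 0 ≤ N) :
    ∃ K : NNReal, LipschitzWith K (fun y : ℝ => g (max (-N) (min N y))) := by
  have hmem : ∀ y : ℝ, max (-N) (min N y) ∈ Icc (-N) N := fun y =>
    ⟨le_max_left _ _, max_le (by linarith) (min_le_left _ _)⟩
  have hder : ContinuousOn (fun x => deriv g x) (Icc (-N) N) :=
    (hg.continuous_deriv le_rfl).continuousOn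
  obtain ⟨C, hC⟩ := isCompact_Icc.exists_bound_of_continuousOn hder
  have hC0 : 0 ≤ C := le_trans (norm_nonneg _) (hC (-N) ⟨le_refl _, by linarith⟩)
  have hlips : LipschitzOnWith (Real.toNNReal C) g (Icc (-N) N) := by
    apply (convex_Icc _ _).lipschitzOnWith_of_nnnorm_deriv_le
      (fun x _ => (hg.differentiable one_ne_zero).differentiableAt)
    intro x hx
    rw [Real.le_toNNReal_iff_coe_le hC0]
    exact hC x hx
  refine ⟨Real.toNNReal C, LipschitzWith.of_dist_le_mul fun y z => ?_⟩
  refine (hlips.dist_le_mul _ (hmem y) _ (hmem z)).trans ?_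
  have h2 : dist (max (-N) (min N y)) (max (-N) (min N z)) ≤ dist y z := by
    rw [Real.dist_eq, Real.dist_eq, max_comm (-N) (min N y), max_comm (-N) (min N z)]
    refine (abs_max_sub_max_le_abs _ _ _).trans ?_
    calc |min N y - min N z| ≤ max |N - N| |y - z| := abs_min_sub_min_le_max _ _ _ _
    _ ≤ |y - z| := by simp
  exact mul_le_mul_of_nonneg_left h2 (NNReal.coe_nonneg _)

open Set in
set_option maxHeartbeats 1000000 in
theorem stmt_10 (p : ℝ) (hp : 0 < p) (a f g : ℝ → ℝ)
    (ha : Continuous a) (hf : Continuous f) (hg : ContDiff ℝ 1 g)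
    (hap : ∀ t, a (t + p) = a t) (hfp : ∀ t, f (t + p) = f t)
    (hina : ∫ s in (0:ℝ)..p, a s = 0)
    (μ : ℝ → ℝ) (hμ : ∀ t, μ t = Real.exp (∫ s in (0:ℝ)..t, a s))
    (gm gp : ℝ) (hgm : Tendsto g atBot (nhds gm)) (hgp : Tendsto g atTop (nhds gp))
    (hgb : ∀ x : ℝ, gm < g x ∧ g x < gp)
    (hLL : gm * ∫ t in (0:ℝ)..p, μ t < ∫ t in (0:ℝ)..p, μ t * f t ∧
      (∫ t in (0:ℝ)..p, μ t * f t) < gp * ∫ t in (0:ℝ)..p, μ t) :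
    ∃ x : ℝ → ℝ, (∀ t, HasDerivAt x (f t - a t * x t - g (x t)) t) ∧
      ∀ t, x (t + p) = x t := by
  -- ## facts about μ
  set A : ℝ → ℝ := fun t => ∫ s in (0:ℝ)..t, a s with hA
  have hAcont : Continuous A :=
    intervalIntegral.continuous_primitive (fun a_1 b => ha.intervalIntegrable _ _) 0
  have hAd : ∀ t, HasDerivAt A (a t) t := fun t =>
    (intervalIntegral.integral_hasStrictDerivAt_right (ha.intervalIntegrable _ _)
      (ha.stronglyMeasurableAtFilter _ _) ha.continuousAt).hasDerivAt
  have hμe : μ = fun t => Real.exp (A t) := funext hμ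
  have hμc : Continuous μ := by rw [hμe]; exact Real.continuous_exp.comp hAcont
  have hμpos : ∀ t, 0 < μ t := fun t => by rw [hμ]; exact Real.exp_pos _
  have hμd : ∀ t, HasDerivAt μ (a t * μ t) t := by
    intro t
    rw [hμe]
    have := (Real.hasDerivAt_exp (A t)).comp t (hAd t)
    rw [mul_comm] at this
    exact this
  have haper : Function.Periodic a p := hap
  have hfper : Function.Periodic f p := hfp
  have hμper : Function.Periodic μ p := by
    intro t
    rw [hμ, hμ]
    congr 1
    have h1 : ∫ s in (0:ℝ)..(t+p), a s = (∫ s in (0:ℝ)..t, a s) + ∫ s in t..(t+p), a s :=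
      (intervalIntegral.integral_add_adjacent_intervals (ha.intervalIntegrable _ _)
        (ha.intervalIntegrable _ _)).symm
    rw [h1, haper.intervalIntegral_add_eq t 0]
    simp [hina]
  -- ## bounds
  obtain ⟨tm, tM, hμb⟩ := per_bdd' hp hμc hμper
  set mμ : ℝ := μ tm with hmμdef
  set Mμ : ℝ := μ tM with hMμdef
  have hmμ : 0 < mμ := hμpos tm
  have hMμ : 0 < Mμ := hμpos tM
  obtain ⟨tf1, tf2, hfb'⟩ := per_bdd' hp hf hfper
  set Mf : ℝ := max |f tf1| |f tf2| with hMfdef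
  have hMf : ∀ t, |f t| ≤ Mf := by
    intro t
    refine abs_le.2 ⟨?_, ?_⟩
    · have := (hfb' t).1
      have h2 : -Mf ≤ f tf1 := by
        have := neg_abs_le (f tf1)
        have := le_max_left |f tf1| |f tf2|
        simp only [hMfdef]; linarith
      linarith
    · have := (hfb' t).2
      have h2 : f tf2 ≤ Mf := le_trans (le_abs_self _) (le_max_right _ _)
      linarith
  set Mg : ℝ := max |gm| |gp| with hMgdef
  have hMg : ∀ x, |g x| ≤ Mg := by
    intro x
    refine abs_le.2 ⟨?_, ?_⟩
    · have h1 := (hgb x).1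
      have h2 : -Mg ≤ gm := by
        have := neg_abs_le gm
        have := le_max_left |gm| |gp|
        simp only [hMgdef]; linarith
      linarith
    · have h1 := (hgb x).2
      have h2 : gp ≤ Mg := le_trans (le_abs_self _) (le_max_right _ _)
      linarith
  have hMf0 : 0 ≤ Mf := le_trans (abs_nonneg _) (hMf 0)
  have hMg0 : 0 ≤ Mg := le_trans (abs_nonneg _) (hMg 0)
  set B : ℝ := Mμ * (Mf + Mg) with hBdef
  have hB0 : 0 ≤ B := by positivity
  set Iμ : ℝ := ∫ t in (0:ℝ)..p, μ t with hIμdef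
  have hIμ : 0 < Iμ :=
    intervalIntegral_pos_of_pos (hμc.intervalIntegrable _ _) (fun x => hμpos x) hp
  set q : ℝ := (∫ t in (0:ℝ)..p, μ t * f t) / Iμ with hqdef
  have hqm : gm < q := (lt_div_iff₀ hIμ).2 hLL.1
  have hqp : q < gp := (div_lt_iff₀ hIμ).2 hLL.2
  have hqint : ∫ t in (0:ℝ)..p, μ t * f t = q * Iμ := (div_mul_cancel₀ _ hIμ.ne').symm
  obtain ⟨Xp, hXp⟩ := eventually_atTop.1 (hgp.eventually
    (eventually_gt_nhds (show (q + gp)/2 < gp by linarith)))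
  obtain ⟨Xm, hXm⟩ := eventually_atBot.1 (hgm.eventually
    (eventually_lt_nhds (show gm < (q + gm)/2 by linarith)))
  set c : ℝ := |Xp| + |Xm| + 1 with hcdef
  have hc0 : 0 < c := by positivity
  set R : ℝ := B * p + Mμ * c with hRdef
  have hR0 : 0 ≤ R := by positivity
  have hRBp : R - B * p = Mμ * c := by rw [hRdef]; ring
  set N : ℝ := (R + B * p) / mμ with hNdef
  have hN0 : 0 ≤ N := by positivity
  clear_value mμ Mμ Mf Mg B Iμ q c R N
  obtain ⟨K, hK⟩ := clamp_lip' hg N hN0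
  set gc : ℝ → ℝ := fun y => g (max (-N) (min N y)) with hgcdef
  have hgceq : ∀ y, |y| ≤ N → gc y = g y := by
    intro y hy
    rw [hgcdef]
    simp only
    rw [min_eq_right (abs_le.1 hy).2, max_eq_right (abs_le.1 hy).1]
  have hgcb : ∀ y, |gc y| ≤ Mg := fun y => hMg _
  set G : ℝ → ℝ → ℝ := fun t y => μ t * (f t - gc (y / μ t)) with hGdef
  have hGb : ∀ t y, |G t y| ≤ B := by
    intro t y
    rw [hGdef]
    simp only
    rw [abs_mul, abs_of_pos (hμpos t), hBdef]
    refine mul_le_mul (hμb t).2 ?_ (abs_nonneg _) hMμ.le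
    calc |f t - gc (y / μ t)| ≤ |f t| + |gc (y / μ t)| := abs_sub _ _
    _ ≤ Mf + Mg := add_le_add (hMf t) (hgcb _)
  have hGlip : ∀ t, LipschitzWith K (G t) := by
    intro t
    apply LipschitzWith.of_dist_le_mul
    intro y z
    have h1 : dist (G t y) (G t z) = μ t * dist (gc (y / μ t)) (gc (z / μ t)) := by
      rw [Real.dist_eq, Real.dist_eq, hGdef]
      simp only
      rw [show μ t * (f t - gc (y / μ t)) - μ t * (f t - gc (z / μ t))
        = μ t * (gc (z / μ t) - gc (y / μ t)) by ring, abs_mul, abs_of_pos (hμpos t),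
        abs_sub_comm]
    rw [h1]
    have h2 := hK.dist_le_mul (y / μ t) (z / μ t)
    calc μ t * dist (gc (y / μ t)) (gc (z / μ t))
        ≤ μ t * ((K : ℝ) * dist (y / μ t) (z / μ t)) :=
          mul_le_mul_of_nonneg_left h2 (hμpos t).le
    _ = (K : ℝ) * dist y z := by
        rw [Real.dist_eq, Real.dist_eq, div_sub_div_same, abs_div, abs_of_pos (hμpos t)]
        field_simp [(hμpos t).ne']
  have hGcontt : ∀ y, Continuous (fun t => G t y) := by
    intro y
    exact hμc.mul (hf.sub (hK.continuous.comp (continuous_const.div hμc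
      (fun t => (hμpos t).ne'))))
  have hGtraj : ∀ (Y : ℝ → ℝ) (s : Set ℝ), ContinuousOn Y s →
      ContinuousOn (fun t => G t (Y t)) s := by
    intro Y s hY
    exact (hμc.continuousOn.mul (hf.continuousOn.sub (hK.continuous.comp_continuousOn
      (hY.div hμc.continuousOn (fun t _ => (hμpos t).ne')))))
  have hGper : ∀ y, Function.Periodic (fun t => G t y) p := by
    intro y t
    simp only [hGdef]
    rw [hμper t, hfper t]
  -- ## existence of solutions on [0, p]
  have hsol : ∀ y0 : ℝ, ∃ Y : ℝ → ℝ, Y 0 = y0 ∧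
      ∀ t ∈ Icc (0:ℝ) p, HasDerivWithinAt Y (G t (Y t)) (Icc (0:ℝ) p) t := by
    intro y0
    have hPL : IsPicardLindelof G (⟨0, ⟨le_refl 0, hp.le⟩⟩ : Icc (0:ℝ) p) y0
        ⟨B * p, mul_nonneg hB0 hp.le⟩ 0 ⟨B, hB0⟩ K := by
      constructor
      · exact fun t _ => (hGlip t).lipschitzOnWith
      · exact fun x _ => (hGcontt x).continuousOn
      · intro t _ x _
        rw [Real.norm_eq_abs]
        exact hGb t x
      · simp [max_eq_left hp.le]
        exact le_rfl
    exact hPL.exists_eq_forall_mem_Icc_hasDerivWithinAt₀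
  choose Y hY0 hYd using hsol
  have hYcont : ∀ y0, ContinuousOn (Y y0) (Icc (0:ℝ) p) :=
    fun y0 t ht => (hYd y0 t ht).continuousWithinAt
  have hYici : ∀ y0, ∀ t ∈ Ico (0:ℝ) p, HasDerivWithinAt (Y y0) (G t (Y y0 t)) (Ici t) t :=
    fun y0 t ht => (hYd y0 t (Ico_subset_Icc_self ht)).mono_of_mem_nhdsWithin
      (Icc_mem_nhdsGE_of_mem ht)
  have hFTC : ∀ y0, ∀ b ∈ Icc (0:ℝ) p, (∫ t in (0:ℝ)..b, G t (Y y0 t)) = Y y0 b - y0 := by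
    intro y0 b hb
    have hint : IntervalIntegrable (fun t => G t (Y y0 t)) MeasureTheory.volume 0 b := by
      apply ContinuousOn.intervalIntegrable
      rw [uIcc_of_le hb.1]
      exact (hGtraj _ _ (hYcont y0)).mono (Icc_subset_Icc le_rfl hb.2)
    have h := intervalIntegral.integral_eq_sub_of_hasDeriv_right_of_le hb.1
      ((hYcont y0).mono (Icc_subset_Icc le_rfl hb.2))
      (fun t ht => (hYd y0 t ⟨ht.1.le, ht.2.le.trans hb.2⟩).mono_of_mem_nhdsWithin
        (Icc_mem_nhdsGT_of_mem ⟨ht.1.le, lt_of_lt_of_le ht.2 hb.2⟩))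
      hint
    rw [h, hY0]
  have hYdist : ∀ y0, ∀ t ∈ Icc (0:ℝ) p, |Y y0 t - y0| ≤ B * p := by
    intro y0 t ht
    rw [← hFTC y0 t ht]
    have h1 := intervalIntegral.norm_integral_le_of_norm_le_const (C := B) (a := 0) (b := t)
      (f := fun s => G s (Y y0 s)) (fun x _ => by rw [Real.norm_eq_abs]; exact hGb _ _)
    rw [Real.norm_eq_abs] at h1
    refine h1.trans ?_
    rw [sub_zero, abs_of_nonneg ht.1]
    exact mul_le_mul_of_nonneg_left ht.2 hB0
  -- ## Poincaré map is Lipschitz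
  have hPdist : ∀ y1 y2, dist (Y y1 p) (Y y2 p) ≤ dist y1 y2 * Real.exp ((K:ℝ) * p) := by
    intro y1 y2
    have h := dist_le_of_trajectories_ODE (v := G) (K := K) (δ := dist y1 y2) hGlip
      (hYcont y1) (hYici y1) (hYcont y2) (hYici y2) (le_of_eq (by rw [hY0, hY0]))
    have := h p ⟨hp.le, le_rfl⟩
    rwa [sub_zero] at this
  have hPcont : Continuous (fun y0 => Y y0 p) := by
    refine LipschitzWith.continuous (K := Real.toNNReal (Real.exp ((K:ℝ) * p)))
      (LipschitzWith.of_dist_le_mul fun y1 y2 => ?_)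
    rw [Real.coe_toNNReal _ (Real.exp_nonneg _)]
    rw [mul_comm]
    exact hPdist y1 y2
  -- ## sign of the Poincaré displacement at ±R
  have hIntμf : IntervalIntegrable (fun t => μ t * f t) MeasureTheory.volume 0 p :=
    (hμc.mul hf).intervalIntegrable _ _
  have hIntμc : ∀ d : ℝ, IntervalIntegrable (fun t => μ t * d) MeasureTheory.volume 0 p :=
    fun d => (hμc.mul continuous_const).intervalIntegrable _ _
  have hIntG : ∀ y0, IntervalIntegrable (fun t => G t (Y y0 t)) MeasureTheory.volume 0 p := by
    intro y0
    apply ContinuousOn.intervalIntegrable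
    rw [uIcc_of_le hp.le]
    exact hGtraj _ _ (hYcont y0)
  have hconstint : ∀ d : ℝ, (∫ t in (0:ℝ)..p, μ t * f t - μ t * d)
      = q * Iμ - Iμ * d := by
    intro d
    rw [intervalIntegral.integral_sub hIntμf (hIntμc d), hqint,
      intervalIntegral.integral_mul_const, hIμdef]
  have hsignR : Y R p - R < 0 := by
    have hkey : ∀ t ∈ Icc (0:ℝ) p, G t (Y R t) ≤ μ t * f t - μ t * ((q + gp)/2) := by
      intro t ht
      have h1 := abs_le.1 (hYdist R t ht)
      have h2 : Mμ * c ≤ Y R t := by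
        have := h1.1
        rw [hRdef] at *
        linarith
      have h3 : c ≤ Y R t / μ t := by
        rw [le_div_iff₀ (hμpos t)]
        calc c * μ t ≤ c * Mμ := mul_le_mul_of_nonneg_left (hμb t).2 hc0.le
        _ = Mμ * c := by ring
        _ ≤ Y R t := h2
      have h4 : Xp ≤ Y R t / μ t := by
        have : Xp ≤ c := by
          have := le_abs_self Xp
          have := abs_nonneg Xm
          rw [hcdef]; linarith
        linarith
      have h5 : (q + gp)/2 < g (Y R t / μ t) := hXp _ h4
      have h6 : |Y R t / μ t| ≤ N := by
        rw [abs_div, abs_of_pos (hμpos t), hNdef]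
        apply div_le_div₀ (add_nonneg hR0 (mul_nonneg hB0 hp.le)) ?_ hmμ (hμb t).1
        calc |Y R t| ≤ |Y R t - R| + |R| := by
              have := abs_add_le (Y R t - R) R
              simpa using this
        _ ≤ B * p + R := by
              have := hYdist R t ht
              rw [abs_of_nonneg hR0]
              linarith
        _ = R + B * p := by ring
      have h7 : gc (Y R t / μ t) = g (Y R t / μ t) := hgceq _ h6
      rw [hGdef]
      simp only
      rw [h7, mul_sub]
      have := mul_le_mul_of_nonneg_left h5.le (hμpos t).le
      linarith
    have hle : (∫ t in (0:ℝ)..p, G t (Y R t))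
        ≤ ∫ t in (0:ℝ)..p, (μ t * f t - μ t * ((q + gp)/2)) :=
      intervalIntegral.integral_mono_on hp.le (hIntG R) (hIntμf.sub (hIntμc _)) hkey
    rw [hFTC R p ⟨hp.le, le_rfl⟩] at hle
    rw [hconstint ((q + gp)/2)] at hle
    nlinarith
  have hsignL : 0 < Y (-R) p - (-R) := by
    have hkey : ∀ t ∈ Icc (0:ℝ) p, μ t * f t - μ t * ((q + gm)/2) ≤ G t (Y (-R) t) := by
      intro t ht
      have h1 := abs_le.1 (hYdist (-R) t ht)
      have h2 : Y (-R) t ≤ -(Mμ * c) := by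
        have := h1.2
        rw [hRdef] at *
        linarith
      have h3 : Y (-R) t / μ t ≤ -c := by
        rw [div_le_iff₀ (hμpos t)]
        calc Y (-R) t ≤ -(Mμ * c) := h2
        _ ≤ -(μ t * c) := by
              have : μ t * c ≤ Mμ * c := mul_le_mul_of_nonneg_right (hμb t).2 hc0.le
              linarith
        _ = -c * μ t := by ring
      have h4 : Y (-R) t / μ t ≤ Xm := by
        have : -c ≤ Xm := by
          have := neg_abs_le Xm
          have := abs_nonneg Xp
          rw [hcdef]; linarith
        linarith
      have h5 : g (Y (-R) t / μ t) < (q + gm)/2 := hXm _ h4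
      have h6 : |Y (-R) t / μ t| ≤ N := by
        rw [abs_div, abs_of_pos (hμpos t), hNdef]
        apply div_le_div₀ (add_nonneg hR0 (mul_nonneg hB0 hp.le)) ?_ hmμ (hμb t).1
        calc |Y (-R) t| ≤ |Y (-R) t - (-R)| + |(-R)| := by
              have := abs_add_le (Y (-R) t - (-R)) (-R)
              simpa using this
        _ ≤ B * p + R := by
              have := hYdist (-R) t ht
              rw [abs_neg, abs_of_nonneg hR0]
              linarith
        _ = R + B * p := by ring
      have h7 : gc (Y (-R) t / μ t) = g (Y (-R) t / μ t) := hgceq _ h6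
      rw [hGdef]
      simp only
      rw [h7, mul_sub]
      have := mul_le_mul_of_nonneg_left h5.le (hμpos t).le
      linarith
    have hle : (∫ t in (0:ℝ)..p, (μ t * f t - μ t * ((q + gm)/2)))
        ≤ ∫ t in (0:ℝ)..p, G t (Y (-R) t) :=
      intervalIntegral.integral_mono_on hp.le (hIntμf.sub (hIntμc _)) (hIntG (-R)) hkey
    rw [hFTC (-R) p ⟨hp.le, le_rfl⟩] at hle
    rw [hconstint ((q + gm)/2)] at hle
    nlinarith
  -- ## fixed point via IVT
  have hcont2 : ContinuousOn (fun y0 => Y y0 p - y0) (Icc (-R) R) :=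
    (hPcont.sub continuous_id).continuousOn
  have hsub := intermediate_value_Icc' (by linarith : -R ≤ R) hcont2
  obtain ⟨ys, hysmem, hys⟩ := hsub ⟨hsignR.le, hsignL.le⟩
  have hWp : Y ys p = Y ys 0 := by
    rw [hY0]
    simp only at hys
    linarith
  set W : ℝ → ℝ := Y ys with hWdef
  have hW0 : W 0 = ys := hY0 ys
  have hWd : ∀ t ∈ Icc (0:ℝ) p, HasDerivWithinAt W (G t (W t)) (Icc (0:ℝ) p) t := hYd ys
  have hWb : ∀ s ∈ Icc (0:ℝ) p, |W s| ≤ R + B * p := by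
    intro s hs
    have h1 := hYdist ys s hs
    have hys' : |ys| ≤ R := abs_le.2 ⟨hysmem.1, hysmem.2⟩
    calc |W s| ≤ |W s - ys| + |ys| := by
          have := abs_add_le (W s - ys) ys
          simpa using this
    _ ≤ B * p + R := by
          rw [hWdef]; exact add_le_add h1 hys'
    _ = R + B * p := by ring
  -- ## periodic extension
  set Z : ℝ → ℝ := fun t => W (t - (⌊t / p⌋ : ℝ) * p) with hZdef
  have hfrac : ∀ t : ℝ, t - (⌊t / p⌋ : ℝ) * p ∈ Ico (0:ℝ) p := by
    intro t
    constructor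
    · have h1 : (⌊t/p⌋ : ℝ) * p ≤ (t/p) * p :=
        mul_le_mul_of_nonneg_right (Int.floor_le _) hp.le
      rw [div_mul_cancel₀ _ hp.ne'] at h1
      linarith
    · have h2 : t/p < (⌊t/p⌋ : ℝ) + 1 := Int.lt_floor_add_one _
      have h3 : t < ((⌊t/p⌋ : ℝ) + 1) * p := (div_lt_iff₀ hp).1 h2
      rw [add_mul, one_mul] at h3
      linarith
  have hfloor_eq : ∀ (n : ℤ) (u : ℝ), u ∈ Ico ((n:ℝ) * p) ((n:ℝ) * p + p) → ⌊u / p⌋ = n := by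
    intro n u hu
    apply Int.floor_eq_iff.2
    constructor
    · rw [le_div_iff₀ hp]
      exact hu.1
    · rw [div_lt_iff₀ hp, add_mul, one_mul]
      exact hu.2
  have hZeq : ∀ (n : ℤ) (u : ℝ), u ∈ Ico ((n:ℝ) * p) ((n:ℝ) * p + p) →
      Z u = W (u - (n:ℝ) * p) := by
    intro n u hu
    rw [hZdef]
    simp only
    rw [hfloor_eq n u hu]
  have hZper : ∀ t, Z (t + p) = Z t := by
    intro t
    have hfl1 : ⌊(t + p)/p⌋ = ⌊t/p⌋ + 1 := by
      rw [add_div, div_self hp.ne', Int.floor_add_one]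
    rw [hZdef]
    simp only
    rw [hfl1]
    congr 1
    push_cast
    ring
  have hGperZ : ∀ (n : ℤ) (t : ℝ) (y : ℝ), G (t - (n:ℝ) * p) y = G t y := by
    intro n t y
    have := (hGper y).sub_int_mul_eq (x := t) n
    simpa using this
  have hZd : ∀ t, HasDerivAt Z (G t (Z t)) t := by
    intro t
    set n : ℤ := ⌊t / p⌋ with hn
    have hsIco : t - (n:ℝ) * p ∈ Ico (0:ℝ) p := hfrac t
    have hZtW : Z t = W (t - (n:ℝ) * p) := by rw [hZdef, hn]
    rcases eq_or_lt_of_le hsIco.1 with h0 | h0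
    · -- boundary case : t = n * p
      have h00 : t - (n:ℝ) * p = 0 := h0.symm
      have htnp : t = (n:ℝ) * p := by linarith
      have hZt : Z t = W 0 := by rw [hZtW, h00]
      -- right derivative
      have hWr : HasDerivWithinAt W (G 0 (W 0)) (Ici (0:ℝ)) 0 :=
        (hWd 0 ⟨le_rfl, hp.le⟩).mono_of_mem_nhdsWithin (Icc_mem_nhdsGE_of_mem ⟨le_rfl, hp⟩)
      have hVr : HasDerivWithinAt (fun u => W (u - (n:ℝ) * p)) (G 0 (W 0)) (Ici t) t := by
        have hin : HasDerivWithinAt (fun u : ℝ => u - (n:ℝ) * p) 1 (Ici t) t :=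
          ((hasDerivAt_id t).sub_const _).hasDerivWithinAt
        rw [← h00] at hWr
        have hmaps : MapsTo (fun u : ℝ => u - (n:ℝ) * p) (Ici t) (Ici (t - (n:ℝ) * p)) := by
          intro u hu
          simp only [mem_Ici] at *
          linarith
        have := hWr.comp t hin hmaps
        simpa [Function.comp_def, h00] using this
      have hZr : HasDerivWithinAt Z (G 0 (W 0)) (Ici t) t := by
        apply hVr.congr_of_eventuallyEq ?_ (by rw [hZt, h00])
        filter_upwards [Ico_mem_nhdsGE (by linarith : t < t + p)]
          with u hu
        exact hZeq n u ⟨by linarith [hu.1], by linarith [hu.2]⟩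
      -- left derivative
      have hWl : HasDerivWithinAt W (G p (W p)) (Iic p) p :=
        (hWd p ⟨hp.le, le_rfl⟩).mono_of_mem_nhdsWithin (Icc_mem_nhdsLE_of_mem ⟨hp, le_rfl⟩)
      have hGpW : G p (W p) = G 0 (W 0) := by
        rw [hWp]
        have h := (hGper (W 0)) 0
        simp only [zero_add] at h
        exact h
      rw [hGpW] at hWl
      have hpt : t - ((n:ℝ) - 1) * p = p := by rw [htnp]; ring
      have hVl : HasDerivWithinAt (fun u => W (u - ((n:ℝ) - 1) * p)) (G 0 (W 0)) (Iic t) t := by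
        have hin : HasDerivWithinAt (fun u : ℝ => u - ((n:ℝ) - 1) * p) 1 (Iic t) t :=
          ((hasDerivAt_id t).sub_const _).hasDerivWithinAt
        rw [← hpt] at hWl
        have hmaps : MapsTo (fun u : ℝ => u - ((n:ℝ) - 1) * p) (Iic t) (Iic (t - ((n:ℝ) - 1) * p)) := by
          intro u hu
          simp only [mem_Iic] at *
          linarith
        have := hWl.comp t hin hmaps
        simpa [Function.comp_def, hpt] using this
      have hZl : HasDerivWithinAt Z (G 0 (W 0)) (Iic t) t := by
        apply hVl.congr_of_eventuallyEq ?_ (by rw [hZt, hpt, hWp, hW0, ← hW0])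
        filter_upwards [Ioc_mem_nhdsLE (by linarith : t - p < t)]
          with u hu
        rcases eq_or_lt_of_le hu.2 with he | hlt
        · rw [he, hZt]
          have : t - ((n:ℝ) - 1) * p = p := hpt
          rw [this, hWp]
        · have h1 : ((n:ℤ) - 1 : ℤ) = n - 1 := rfl
          have := hZeq (n - 1) u ⟨by push_cast; linarith [hu.1], by push_cast; linarith [hlt]⟩
          rw [this]
          congr 2
          push_cast
          ring
      have hcomb := hZl.union hZr
      rw [Iic_union_Ici, hasDerivWithinAt_univ] at hcomb
      have hval : G 0 (W 0) = G t (Z t) := by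
        calc G 0 (W 0) = G (t - (n:ℝ) * p) (W 0) := by rw [h00]
        _ = G t (W 0) := hGperZ n t _
        _ = G t (Z t) := by rw [hZt]
      rwa [hval] at hcomb
    · -- interior case
      have hs2 : t - (n:ℝ) * p < p := hsIco.2
      have hWt : HasDerivAt W (G (t - (n:ℝ) * p) (W (t - (n:ℝ) * p))) (t - (n:ℝ) * p) :=
        (hWd _ ⟨hsIco.1, hs2.le⟩).hasDerivAt (Icc_mem_nhds h0 hs2)
      have hV : HasDerivAt (fun u => W (u - (n:ℝ) * p))
          (G (t - (n:ℝ) * p) (W (t - (n:ℝ) * p))) t := by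
        have hin : HasDerivAt (fun u : ℝ => u - (n:ℝ) * p) 1 t := (hasDerivAt_id t).sub_const _
        have := hWt.comp t hin
        simpa [Function.comp_def] using this
      have hZt : HasDerivAt Z (G (t - (n:ℝ) * p) (W (t - (n:ℝ) * p))) t := by
        apply hV.congr_of_eventuallyEq
        filter_upwards [Ioo_mem_nhds (show (n:ℝ) * p < t by linarith)
          (show t < (n:ℝ) * p + p by linarith)] with u hu
        exact hZeq n u ⟨hu.1.le, hu.2⟩
      have hval : G (t - (n:ℝ) * p) (W (t - (n:ℝ) * p)) = G t (Z t) := by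
        rw [hGperZ n t, hZtW]
      rwa [hval] at hZt
  -- ## final solution
  refine ⟨fun t => Z t / μ t, ?_, ?_⟩
  · intro t
    have hZb : |Z t| ≤ R + B * p := hWb _ (Ico_subset_Icc_self (hfrac t))
    have hxb : |Z t / μ t| ≤ N := by
      rw [abs_div, abs_of_pos (hμpos t), hNdef]
      exact div_le_div₀ (add_nonneg hR0 (mul_nonneg hB0 hp.le)) hZb hmμ (hμb t).1
    have hgcx : gc (Z t / μ t) = g (Z t / μ t) := hgceq _ hxb
    have hd := (hZd t).div (hμd t) (hμpos t).ne'
    refine HasDerivAt.congr_deriv hd ?_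
    rw [hGdef]
    simp only
    rw [hgcx]
    field_simp [(hμpos t).ne']
    ring
  · intro t
    simp only
    rw [hZper, hμper]
end

section
/- Assume ∫₀ᵖ a = 0, g(-∞) < g(x) < g(∞) for all x, and ∫₀ᵖ μ(t) f(t) dt ≥ g(∞) ∫₀ᵖ μ(t) dt, where μ(t) = exp(∫₀ᵗ a). Then every solution x of x' + a(t)x + g(x) = f(t) satisfies x((m+1)p) > x(mp) for all integers m ≥ 0, and x(t) → ∞ as t → ∞. -/
open intervalIntegral Filter

/-- A continuous periodic function is bounded. -/
lemma aux_per_bdd {h : ℝ → ℝ} {p : ℝ} (hp : 0 < p) (hc : Continuous h)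
    (hper : Function.Periodic h p) : ∃ C : ℝ, 0 ≤ C ∧ ∀ t, |h t| ≤ C := by
  obtain ⟨C, hC⟩ := (isCompact_Icc (a := (0:ℝ)) (b := p)).exists_bound_of_continuousOn
    hc.continuousOn
  refine ⟨C, le_trans (norm_nonneg (h 0)) (hC 0 ⟨le_refl _, hp.le⟩), fun t => ?_⟩
  obtain ⟨s, hs, hst⟩ := hper.exists_mem_Ico₀ hp t
  rw [show |h t| = ‖h s‖ by rw [hst]; rfl]
  exact hC s ⟨hs.1, hs.2.le⟩

theorem stmt_11 (p : ℝ) (hp : 0 < p) (a f g : ℝ → ℝ)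
    (ha : Continuous a) (hf : Continuous f) (hg : Continuous g)
    (hap : ∀ t, a (t + p) = a t) (hfp : ∀ t, f (t + p) = f t)
    (hina : ∫ s in (0:ℝ)..p, a s = 0)
    (μ : ℝ → ℝ) (hμ : ∀ t, μ t = Real.exp (∫ s in (0:ℝ)..t, a s))
    (gm gp : ℝ) (hgm : Tendsto g atBot (nhds gm)) (hgp : Tendsto g atTop (nhds gp))
    (hgb : ∀ x : ℝ, gm < g x ∧ g x < gp)
    (hge : (∫ t in (0:ℝ)..p, μ t * f t) ≥ gp * ∫ t in (0:ℝ)..p, μ t) :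
    ∀ x : ℝ → ℝ, (∀ t, HasDerivAt x (f t - a t * x t - g (x t)) t) →
      (∀ m : ℕ, x ((m : ℝ) * p) < x (((m : ℝ) + 1) * p)) ∧
      Tendsto x atTop atTop := by
  intro x hx
  set A : ℝ → ℝ := fun u => ∫ s in (0:ℝ)..u, a s with hA_def
  have hA : ∀ t, HasDerivAt A (a t) t := fun t =>
    integral_hasDerivAt_right (ha.intervalIntegrable 0 t)
      (ha.stronglyMeasurableAtFilter _ _) ha.continuousAt
  have hAc : Continuous A := continuous_iff_continuousAt.2 fun t => (hA t).continuousAt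
  have hAp : Function.Periodic A p := by
    intro t
    have h1 : (∫ s in t..(t+p), a s) = ∫ s in (0:ℝ)..(0+p), a s :=
      Function.Periodic.intervalIntegral_add_eq hap t 0
    have h2 : (∫ s in (0:ℝ)..t, a s) + ∫ s in t..(t+p), a s = ∫ s in (0:ℝ)..(t+p), a s :=
      integral_add_adjacent_intervals (ha.intervalIntegrable 0 t) (ha.intervalIntegrable t (t+p))
    simp only [zero_add] at h1
    simp only [hA_def]
    rw [← h2, h1, hina, add_zero]
  have hμp : Function.Periodic μ p := by
    intro t; rw [hμ, hμ]
    exact congrArg Real.exp (hAp t)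
  have hμpos : ∀ t, 0 < μ t := fun t => by rw [hμ]; exact Real.exp_pos _
  have hμc : Continuous μ := by
    rw [funext hμ]
    exact Real.continuous_exp.comp hAc
  have hxc : Continuous x := continuous_iff_continuousAt.2 fun t => (hx t).continuousAt
  have hμd : ∀ t, HasDerivAt μ (a t * μ t) t := by
    intro t
    have h1 : HasDerivAt (fun u => Real.exp (A u)) (Real.exp (A t) * a t) t := (hA t).exp
    rw [← funext hμ, ← hμ t] at h1
    simpa [mul_comm] using h1
  set y : ℝ → ℝ := fun t => μ t * x t with hy_def
  have hyd : ∀ t, HasDerivAt y (μ t * (f t - g (x t))) t := by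
    intro t
    have h := (hμd t).mul (hx t)
    exact h.congr_deriv (by ring)
  have hgx : Continuous fun u => g (x u) := hg.comp hxc
  have hI : Continuous fun u => μ u * (f u - g (x u)) := hμc.mul (hf.sub hgx)
  have hyint : ∀ s t : ℝ, y t - y s = ∫ u in s..t, μ u * (f u - g (x u)) := fun s t =>
    (integral_eq_sub_of_hasDerivAt (fun u _ => hyd u) (hI.intervalIntegrable s t)).symm
  -- bounds
  obtain ⟨F₀, hF₀0, hF₀⟩ := aux_per_bdd hp hf hfp
  obtain ⟨A₁, hA₁0, hA₁⟩ := aux_per_bdd hp hAc hAp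
  set μmax : ℝ := Real.exp A₁ with hμmax_def
  set μmin : ℝ := Real.exp (-A₁) with hμmin_def
  have hμmin0 : 0 < μmin := Real.exp_pos _
  have hμub : ∀ t, μ t ≤ μmax := fun t => by
    rw [hμ]
    exact Real.exp_le_exp.2 (le_trans (le_abs_self _) (hA₁ t))
  have hμlb : ∀ t, μmin ≤ μ t := fun t => by
    rw [hμ]
    exact Real.exp_le_exp.2 (le_trans (neg_le_neg (hA₁ t)) (neg_abs_le _))
  set G₀ : ℝ := max |gm| |gp| with hG₀_def
  have hG₀0 : 0 ≤ G₀ := le_trans (abs_nonneg gm) (le_max_left _ _)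
  have hG₀ : ∀ u, |g u| ≤ G₀ := by
    intro u
    rw [abs_le]
    constructor
    · have h1 := (hgb u).1
      have h2 : -|gm| ≤ gm := neg_abs_le gm
      have h3 : |gm| ≤ G₀ := le_max_left _ _
      linarith
    · have h1 := (hgb u).2
      have h2 : gp ≤ |gp| := le_abs_self gp
      have h3 : |gp| ≤ G₀ := le_max_right _ _
      linarith
  set C : ℝ := μmax * (F₀ + G₀) with hC_def
  have hC0 : 0 ≤ C := mul_nonneg (Real.exp_pos _).le (add_nonneg hF₀0 hG₀0)
  have hyLip : ∀ s t : ℝ, |y t - y s| ≤ C * |t - s| := by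
    intro s t
    rw [hyint s t]
    have h := norm_integral_le_of_norm_le_const (C := C)
      (f := fun u => μ u * (f u - g (x u))) (a := s) (b := t) ?_
    · simpa [Real.norm_eq_abs] using h
    · intro u _
      rw [Real.norm_eq_abs, abs_mul, abs_of_pos (hμpos u)]
      have h1 : |f u - g (x u)| ≤ F₀ + G₀ :=
        le_trans (abs_sub (f u) (g (x u))) (add_le_add (hF₀ u) (hG₀ (x u)))
      exact mul_le_mul (hμub u) h1 (abs_nonneg _) (Real.exp_pos _).le
  -- periodic integral identities
  have P1 : ∀ t : ℝ, (∫ u in t..(t+p), μ u * f u) = ∫ u in (0:ℝ)..p, μ u * f u := by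
    intro t
    have hper : Function.Periodic (fun u => μ u * f u) p := fun s => by
      show μ (s+p) * f (s+p) = μ s * f s
      rw [hμp s, hfp s]
    simpa using hper.intervalIntegral_add_eq t 0
  have P2 : ∀ t : ℝ, (∫ u in t..(t+p), μ u) = ∫ u in (0:ℝ)..p, μ u := by
    intro t
    simpa using hμp.intervalIntegral_add_eq t 0
  set D : ℝ → ℝ := fun t => ∫ u in t..(t+p), μ u * (gp - g (x u)) with hD_def
  have hDc : Continuous fun u => μ u * (gp - g (x u)) :=
    hμc.mul (continuous_const.sub hgx)
  have hDpos : ∀ t, 0 < D t := fun t =>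
    intervalIntegral_pos_of_pos (hDc.intervalIntegrable t (t+p))
      (fun u => mul_pos (hμpos u) (sub_pos.2 (hgb (x u)).2)) (by linarith)
  have key : ∀ t : ℝ, y t + D t ≤ y (t + p) := by
    intro t
    have h1 : y (t+p) - y t = ∫ u in t..(t+p), μ u * (f u - g (x u)) := hyint t (t+p)
    have hsplit : (∫ u in t..(t+p), μ u * (f u - g (x u)))
        = (∫ u in t..(t+p), μ u * f u) - ∫ u in t..(t+p), μ u * g (x u) := by
      rw [← integral_sub (f := fun u => μ u * f u) (g := fun u => μ u * g (x u)) ((hμc.mul hf).intervalIntegrable _ _)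
        ((hμc.mul hgx).intervalIntegrable _ _)]
      congr 1
      funext u
      ring
    have hDsplit : D t = (∫ u in t..(t+p), μ u) * gp - ∫ u in t..(t+p), μ u * g (x u) := by
      have e1 : (∫ u in t..(t+p), μ u * gp) = (∫ u in t..(t+p), μ u) * gp :=
        integral_mul_const gp μ
      have e2 : D t = (∫ u in t..(t+p), μ u * gp) - ∫ u in t..(t+p), μ u * g (x u) := by
        rw [← integral_sub (f := fun u => μ u * gp) (g := fun u => μ u * g (x u)) ((hμc.mul continuous_const).intervalIntegrable _ _)
          ((hμc.mul hgx).intervalIntegrable _ _)]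
        simp only [hD_def]
        congr 1
        funext u
        ring
      rw [e2, e1]
    rw [hsplit, P1 t] at h1
    rw [hDsplit, P2 t]
    linarith
  -- μ at multiples of p equals 1
  have hAnp : ∀ n : ℕ, A ((n:ℝ) * p) = 0 := by
    intro n
    induction n with
    | zero => simp [hA_def]
    | succ k ih =>
      have e : ((k+1:ℕ):ℝ) * p = (k:ℝ) * p + p := by push_cast; ring
      rw [e, hAp ((k:ℝ)*p), ih]
  have hμnp : ∀ n : ℕ, μ ((n:ℝ) * p) = 1 := by
    intro n
    rw [hμ]
    have := hAnp n
    simp only [hA_def] at this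
    rw [this, Real.exp_zero]
  -- monotonicity along multiples of p
  have hmono2 : ∀ n m : ℕ, n ≤ m → y ((n:ℝ)*p) ≤ y ((m:ℝ)*p) := by
    intro n m hnm
    induction m, hnm using Nat.le_induction with
    | base => exact le_refl _
    | succ k hk ih =>
      have e : ((k+1:ℕ):ℝ) * p = (k:ℝ) * p + p := by push_cast; ring
      have h1 := key ((k:ℝ)*p)
      have h2 := hDpos ((k:ℝ)*p)
      push_cast
      push_cast at ih
      rw [show ((k:ℝ)+1) * p = (k:ℝ)*p + p by ring]
      linarith
  constructor
  · -- part 1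
    intro m
    have h1 := key ((m:ℝ)*p)
    have h2 := hDpos ((m:ℝ)*p)
    have e1 : ((m:ℝ)+1)*p = (m:ℝ)*p + p := by ring
    have hy1 : y ((m:ℝ)*p) = x ((m:ℝ)*p) := by
      simp only [hy_def, hμnp m, one_mul]
    have hy2 : y ((m:ℝ)*p + p) = x ((m:ℝ)*p + p) := by
      have : μ ((m:ℝ)*p + p) = 1 := by rw [hμp]; exact hμnp m
      simp only [hy_def, this, one_mul]
    rw [e1, ← hy1, ← hy2]
    linarith
  · -- part 2
    by_contra hcon
    rw [tendsto_atTop] at hcon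
    push_neg at hcon
    obtain ⟨M, hM⟩ := hcon
    rw [frequently_atTop] at hM
    set M' : ℝ := max M 0 with hM'_def
    set K : ℝ := μmax * M' + C * p with hK_def
    have hK0 : 0 ≤ K := add_nonneg (mul_nonneg (Real.exp_pos _).le (le_max_right M 0))
      (mul_nonneg hC0 hp.le)
    set M₂ : ℝ := K / μmin with hM₂_def
    have hM₂0 : 0 ≤ M₂ := div_nonneg hK0 hμmin0.le
    -- a uniform gap of g below gp on (-∞, M₂]
    have hgmgp : gm < gp := lt_trans (hgb 0).1 (hgb 0).2
    have hmid : gm < (gm+gp)/2 := by linarith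
    have hmid2 : (gm+gp)/2 < gp := by linarith
    obtain ⟨R, hR⟩ := eventually_atBot.1 (hgm.eventually_lt_const hmid)
    set R' : ℝ := min R M₂ with hR'_def
    obtain ⟨u₀, hu₀mem, hu₀max⟩ := (isCompact_Icc (a := R') (b := M₂)).exists_isMaxOn
      ⟨M₂, min_le_right R M₂, le_refl M₂⟩ hg.continuousOn
    set δ : ℝ := min (gp - g u₀) (gp - (gm+gp)/2) with hδ_def
    have hδ0 : 0 < δ := lt_min (sub_pos.2 (hgb u₀).2) (by linarith)
    have hδ : ∀ u : ℝ, u ≤ M₂ → g u ≤ gp - δ := by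
      intro u hu
      rcases le_total u R' with h | h
      · have h1 : u ≤ R := le_trans h (min_le_left R M₂)
        have h2 := hR u h1
        have h3 : δ ≤ gp - (gm+gp)/2 := min_le_right _ _
        linarith
      · have h2 : g u ≤ g u₀ := hu₀max ⟨h, hu⟩
        have h3 : δ ≤ gp - g u₀ := min_le_left _ _
        linarith
    set ε : ℝ := p * (μmin * δ) with hε_def
    have hε0 : 0 < ε := mul_pos hp (mul_pos hμmin0 hδ0)
    -- key local lemma
    have L1 : ∀ s₀ t : ℝ, x s₀ < M → t ≤ s₀ → s₀ ≤ t + p → ε ≤ D t := by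
      intro s₀ t hxs hts hst
      have hub : ∀ u ∈ Set.Icc t (t+p), x u ≤ M₂ := by
        intro u hu
        obtain ⟨hu1, hu2⟩ := hu
        have hdist : |u - s₀| ≤ p := abs_le.2 ⟨by linarith, by linarith⟩
        have h1 : |y u - y s₀| ≤ C * p :=
          le_trans (hyLip s₀ u) (mul_le_mul_of_nonneg_left hdist hC0)
        have h2 : y s₀ ≤ μmax * M' := by
          have h3 : μ s₀ * x s₀ ≤ μ s₀ * M' :=
            mul_le_mul_of_nonneg_left (le_trans hxs.le (le_max_left M 0)) (hμpos s₀).le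
          have h4 : μ s₀ * M' ≤ μmax * M' :=
            mul_le_mul_of_nonneg_right (hμub s₀) (le_max_right M 0)
          calc y s₀ = μ s₀ * x s₀ := rfl
            _ ≤ μmax * M' := le_trans h3 h4
        have h3 : μ u * x u ≤ K := by
          have h5 := (abs_le.1 h1).2
          have : y u ≤ K := by
            simp only [hK_def]
            linarith
          exact this
        rcases le_or_gt (x u) 0 with h | h
        · exact le_trans h hM₂0
        · rw [hM₂_def, le_div_iff₀ hμmin0]
          calc x u * μmin ≤ x u * μ u := mul_le_mul_of_nonneg_left (hμlb u) h.le
            _ = μ u * x u := mul_comm _ _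
            _ ≤ K := h3
      have hint : (∫ u in t..(t+p), μmin * δ) ≤ D t := by
        apply integral_mono_on (by linarith) (intervalIntegrable_const)
          (hDc.intervalIntegrable _ _)
        intro u hu
        have hg2 : g (x u) ≤ gp - δ := hδ _ (hub u hu)
        have hg3 : δ ≤ gp - g (x u) := by linarith
        calc μmin * δ ≤ μ u * δ := mul_le_mul_of_nonneg_right (hμlb u) hδ0.le
          _ ≤ μ u * (gp - g (x u)) := mul_le_mul_of_nonneg_left hg3 (hμpos u).le
      have heq : (∫ u in t..(t+p), μmin * δ) = ε := by
        rw [integral_const]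
        simp only [smul_eq_mul, hε_def]
        ring
      linarith
    -- y at multiples of p tends to infinity
    have Q : ∀ k : ℕ, ∃ n : ℕ, y 0 + k * ε ≤ y ((n:ℝ)*p) := by
      intro k
      induction k with
      | zero => exact ⟨0, by simp⟩
      | succ k ih =>
        obtain ⟨n, hn⟩ := ih
        obtain ⟨s₀, hs₀ge, hs₀⟩ := hM ((n:ℝ)*p)
        set m : ℕ := ⌊s₀ / p⌋₊ with hm_def
        have hs₀0 : 0 ≤ s₀ := le_trans (by positivity) hs₀ge
        have hm1 : (m:ℝ) * p ≤ s₀ := by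
          rw [← le_div_iff₀ hp]
          exact Nat.floor_le (div_nonneg hs₀0 hp.le)
        have hm2 : s₀ ≤ (m:ℝ)*p + p := by
          have h := Nat.lt_floor_add_one (s₀ / p)
          rw [div_lt_iff₀ hp] at h
          push_cast at h ⊢
          linarith
        have hnm : n ≤ m := by
          apply Nat.le_floor
          rw [le_div_iff₀ hp]
          exact hs₀ge
        have hD1 : ε ≤ D ((m:ℝ)*p) := L1 s₀ ((m:ℝ)*p) hs₀ hm1 hm2
        have hk1 := key ((m:ℝ)*p)
        have hmono := hmono2 n m hnm
        refine ⟨m+1, ?_⟩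
        have e : ((m+1:ℕ):ℝ)*p = (m:ℝ)*p + p := by push_cast; ring
        rw [e]
        push_cast
        linarith
    -- y tends to infinity
    have hytend : Tendsto y atTop atTop := by
      rw [tendsto_atTop]
      intro b
      obtain ⟨k, hk⟩ := exists_nat_ge ((b + C*p - y 0)/ε)
      obtain ⟨N, hN⟩ := Q k
      have hNb : b + C*p ≤ y ((N:ℝ)*p) := by
        rw [div_le_iff₀ hε0] at hk
        linarith
      rw [eventually_atTop]
      refine ⟨(N:ℝ)*p, fun t ht => ?_⟩
      set n : ℕ := ⌊t/p⌋₊ with hn_def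
      have ht0 : 0 ≤ t := le_trans (by positivity) ht
      have h1 : (n:ℝ)*p ≤ t := by
        rw [← le_div_iff₀ hp]
        exact Nat.floor_le (div_nonneg ht0 hp.le)
      have h2 : t ≤ (n:ℝ)*p + p := by
        have h := Nat.lt_floor_add_one (t / p)
        rw [div_lt_iff₀ hp] at h
        push_cast at h ⊢
        linarith
      have hNn : N ≤ n := by
        apply Nat.le_floor
        rw [le_div_iff₀ hp]
        exact ht
      have h3 : |y t - y ((n:ℝ)*p)| ≤ C * p := by
        refine le_trans (hyLip ((n:ℝ)*p) t) (mul_le_mul_of_nonneg_left ?_ hC0)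
        rw [abs_le]
        constructor <;> linarith
      have h4 := hmono2 N n hNn
      have h5 := (abs_le.1 h3).1
      linarith
    -- x tends to infinity, contradiction
    have hxtend : Tendsto x atTop atTop := by
      rw [tendsto_atTop]
      intro b
      filter_upwards [tendsto_atTop.1 hytend (μmax * max b 0)] with t hyt
      by_contra hlt
      push_neg at hlt
      have hb0 : (0:ℝ) ≤ max b 0 := le_max_right b 0
      have h1 : x t < max b 0 := lt_of_lt_of_le hlt (le_max_left b 0)
      have h2 : μ t * x t < μ t * max b 0 := mul_lt_mul_of_pos_left h1 (hμpos t)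
      have h3 : μ t * max b 0 ≤ μmax * max b 0 := mul_le_mul_of_nonneg_right (hμub t) hb0
      have h4 : y t = μ t * x t := rfl
      linarith
    obtain ⟨T, hT⟩ := eventually_atTop.1 (tendsto_atTop.1 hxtend M)
    obtain ⟨t, htT, hxt⟩ := hM T
    exact absurd (hT t htT) (not_le.2 hxt)
end

section
/- Assume ∫₀ᵖ a = 0, g' (x) > 0 for all x, and that x' + a(t)x + g(x) = f(t) has a p-periodic solution y. Then for any other solution x of the same equation, x(t) - y(t) → 0 as t → ∞; in particular the p-periodic solution is unique. -/
open intervalIntegral Filter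

lemma per_bound {p : ℝ} (hp : 0 < p) {h : ℝ → ℝ} (hc : Continuous h)
    (hper : Function.Periodic h p) : ∃ C, 0 ≤ C ∧ ∀ t, |h t| ≤ C := by
  obtain ⟨C, hC⟩ := (isCompact_Icc (a := (0:ℝ)) (b := p)).exists_bound_of_continuousOn
    hc.continuousOn
  refine ⟨max C 0, le_max_right _ _, fun t => ?_⟩
  obtain ⟨s, hs, hval⟩ := hper.exists_mem_Ico₀ hp t
  rw [hval]
  calc |h s| = ‖h s‖ := (Real.norm_eq_abs _).symm
    _ ≤ C := hC s (Set.mem_Icc_of_Ico hs)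
    _ ≤ max C 0 := le_max_left _ _

lemma slope_key {g : ℝ → ℝ} (hg : Differentiable ℝ g) {c R : ℝ}
    (hc : ∀ w ∈ Set.Icc (-R) R, c ≤ deriv g w) {s t : ℝ}
    (hs : s ∈ Set.Icc (-R) R) (ht : t ∈ Set.Icc (-R) R) :
    c * (s - t) ^ 2 ≤ (g s - g t) * (s - t) := by
  rcases lt_trichotomy t s with h | h | h
  · obtain ⟨ξ, hξ, hslope⟩ := exists_hasDerivAt_eq_slope g (deriv g) h
      hg.continuous.continuousOn (fun w _ => (hg w).hasDerivAt)
    have hne : s - t ≠ 0 := by intro h0; exact absurd (by linarith : s = t) (by linarith)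
    have h1 : g s - g t = deriv g ξ * (s - t) := by
      rw [hslope]; field_simp
    have hξc : c ≤ deriv g ξ :=
      hc ξ ⟨by linarith [ht.1, hξ.1], by linarith [hs.2, hξ.2]⟩
    nlinarith [sq_nonneg (s - t)]
  · subst h; simp
  · obtain ⟨ξ, hξ, hslope⟩ := exists_hasDerivAt_eq_slope g (deriv g) h
      hg.continuous.continuousOn (fun w _ => (hg w).hasDerivAt)
    have hne : t - s ≠ 0 := by intro h0; exact absurd (by linarith : t = s) (by linarith)
    have h1 : g t - g s = deriv g ξ * (t - s) := by
      rw [hslope]; field_simp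
    have hξc : c ≤ deriv g ξ :=
      hc ξ ⟨by linarith [hs.1, hξ.1], by linarith [ht.2, hξ.2]⟩
    nlinarith [sq_nonneg (t - s)]

lemma aux_tendsto (p : ℝ) (hp : 0 < p) (a g : ℝ → ℝ) (f : ℝ → ℝ)
    (ha : Continuous a) (hg : ContDiff ℝ 1 g)
    (hg' : ∀ x : ℝ, 0 < deriv g x)
    (hap : ∀ t, a (t + p) = a t)
    (hina : ∫ s in (0:ℝ)..p, a s = 0)
    (y : ℝ → ℝ) (hy : ∀ t, HasDerivAt y (f t - a t * y t - g (y t)) t)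
    (hyp : ∀ t, y (t + p) = y t)
    (x : ℝ → ℝ) (hx : ∀ t, HasDerivAt x (f t - a t * x t - g (x t)) t) :
    Tendsto (fun t => x t - y t) atTop (nhds 0) := by
  have hgd : Differentiable ℝ g := hg.differentiable one_ne_zero
  have hyd : Differentiable ℝ y := fun t => (hy t).differentiableAt
  have hycont : Continuous y := hyd.continuous
  -- the integral of a
  set A := fun t => ∫ s in (0:ℝ)..t, a s with hAdef
  have hA : ∀ t, HasDerivAt A (a t) t := fun t =>
    intervalIntegral.integral_hasDerivAt_right (ha.intervalIntegrable _ _)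
      (ha.stronglyMeasurableAtFilter _ _) ha.continuousAt
  have hAd : Differentiable ℝ A := fun t => (hA t).differentiableAt
  have hAcont : Continuous A := hAd.continuous
  have hAper : Function.Periodic A p := by
    intro t
    have h1 : ∫ s in t..(t + p), a s = ∫ s in (0:ℝ)..(0 + p), a s :=
      Function.Periodic.intervalIntegral_add_eq hap t 0
    rw [zero_add] at h1
    have h2 : A t + ∫ s in t..(t + p), a s = A (t + p) :=
      intervalIntegral.integral_add_adjacent_intervals (ha.intervalIntegrable _ _)
        (ha.intervalIntegrable _ _)
    rw [← h2, h1, hina, add_zero]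
  obtain ⟨CA, hCA0, hCA⟩ := per_bound hp hAcont hAper
  set mE := Real.exp (-(2 * CA)) with hmEdef
  have hmE : 0 < mE := Real.exp_pos _
  set E := fun t => Real.exp (2 * A t) with hEdef
  have hEpos : ∀ t, 0 < E t := fun t => Real.exp_pos _
  have hEl : ∀ t, mE ≤ E t := fun t =>
    Real.exp_le_exp.2 (by have := (abs_le.1 (hCA t)).1; linarith)
  have hE : ∀ t, HasDerivAt E (2 * a t * E t) t := by
    intro t
    have h := ((hA t).const_mul 2).exp
    convert h using 1
    simp only [hEdef]; ring
  -- the Lyapunov function V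
  set V := fun t => (x t - y t) ^ 2 * E t with hVdef
  have hV : ∀ t, HasDerivAt V
      ((-2 * ((x t - y t) * (g (x t) - g (y t)))) * E t) t := by
    intro t
    have hu : HasDerivAt (fun t => x t - y t)
        ((f t - a t * x t - g (x t)) - (f t - a t * y t - g (y t))) t := (hx t).sub (hy t)
    have h := ((hu.pow 2).mul (hE t))
    refine h.congr_deriv ?_
    push_cast
    simp only [Pi.pow_apply]
    ring
  have hprod : ∀ t, 0 ≤ (g (x t) - g (y t)) * (x t - y t) := by
    intro t
    have hgmono : Monotone g := (strictMono_of_deriv_pos hg').monotone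
    rcases le_total (y t) (x t) with h | h
    · exact mul_nonneg (by linarith [hgmono h]) (by linarith)
    · nlinarith [mul_nonneg (sub_nonneg.2 (hgmono h)) (sub_nonneg.2 h)]
  have hVanti : Antitone V := by
    refine antitone_of_deriv_nonpos (fun t => (hV t).differentiableAt) (fun t => ?_)
    rw [(hV t).deriv]
    nlinarith [mul_nonneg (hprod t) (hEpos t).le]
  have hub : ∀ t, 0 ≤ t → (x t - y t) ^ 2 ≤ V 0 / mE := by
    intro t ht
    have h1 : V t ≤ V 0 := hVanti ht
    have h2 : (x t - y t) ^ 2 * mE ≤ V t := by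
      simp only [hVdef]
      exact mul_le_mul_of_nonneg_left (hEl t) (sq_nonneg _)
    rw [le_div_iff₀ hmE]
    linarith
  obtain ⟨Cy, hCy0, hCy⟩ := per_bound hp hycont hyp
  set B := Real.sqrt (V 0 / mE) with hBdef
  have hBnn : 0 ≤ B := Real.sqrt_nonneg _
  have hB : ∀ t, 0 ≤ t → |x t - y t| ≤ B := by
    intro t ht
    rw [← Real.sqrt_sq_eq_abs]
    exact Real.sqrt_le_sqrt (hub t ht)
  set R := Cy + B with hRdef
  have hyR : ∀ t, y t ∈ Set.Icc (-R) R := by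
    intro t
    have h1 := abs_le.1 (hCy t)
    exact ⟨by simp only [hRdef]; linarith, by simp only [hRdef]; linarith⟩
  have hxR : ∀ t, 0 ≤ t → x t ∈ Set.Icc (-R) R := by
    intro t ht
    have h1 := abs_le.1 (hCy t)
    have h2 := abs_le.1 (hB t ht)
    exact ⟨by simp only [hRdef]; linarith, by simp only [hRdef]; linarith⟩
  -- minimum of g' on [-R, R]
  have hgc : Continuous (deriv g) := hg.continuous_deriv le_rfl
  obtain ⟨ξ, hξI, hξmin⟩ := isCompact_Icc.exists_isMinOn
    (Set.nonempty_Icc.2 (by linarith : -R ≤ R)) hgc.continuousOn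
  set c := deriv g ξ with hcdef
  have hc0 : 0 < c := hg' ξ
  have hcmin : ∀ w ∈ Set.Icc (-R) R, c ≤ deriv g w := fun w hw => hξmin hw
  have hkey : ∀ t, 0 ≤ t →
      c * (x t - y t) ^ 2 ≤ (g (x t) - g (y t)) * (x t - y t) :=
    fun t ht => slope_key hgd hcmin (hxR t ht) (hyR t)
  -- W = V * exp(2ct) is antitone on [0, ∞)
  set W := fun t => V t * Real.exp (2 * c * t) with hWdef
  have hW : ∀ t, HasDerivAt W
      (((-2 * ((x t - y t) * (g (x t) - g (y t)))) * E t) * Real.exp (2 * c * t)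
        + V t * (Real.exp (2 * c * t) * (2 * c))) t := by
    intro t
    have hexp : HasDerivAt (fun t : ℝ => Real.exp (2 * c * t))
        (Real.exp (2 * c * t) * (2 * c * 1)) t := ((hasDerivAt_id t).const_mul (2 * c)).exp
    have h := (hV t).mul hexp
    refine h.congr_deriv ?_
    ring
  have hWd : Differentiable ℝ W := fun t => (hW t).differentiableAt
  have hWanti : AntitoneOn W (Set.Ici 0) := by
    refine antitoneOn_of_deriv_nonpos (convex_Ici 0) hWd.continuous.continuousOn
      hWd.differentiableOn (fun t ht => ?_)
    rw [interior_Ici] at ht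
    rw [(hW t).deriv]
    have h1 := hkey t (le_of_lt ht)
    have h2 : (0:ℝ) < E t * Real.exp (2 * c * t) := mul_pos (hEpos t) (Real.exp_pos _)
    simp only [hVdef]
    nlinarith [mul_nonneg (sub_nonneg.2 h1) h2.le]
  have hVb : ∀ t, 0 ≤ t → V t ≤ V 0 * Real.exp (-(2 * c * t)) := by
    intro t ht
    have h1 : W t ≤ W 0 := hWanti Set.self_mem_Ici (Set.mem_Ici.2 ht) ht
    have h2 : W 0 = V 0 := by simp [hWdef]
    have h3 := mul_le_mul_of_nonneg_right h1 (Real.exp_pos (-(2 * c * t))).le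
    calc V t = W t * Real.exp (-(2 * c * t)) := by
          simp only [hWdef, mul_assoc, ← Real.exp_add]
          simp
      _ ≤ W 0 * Real.exp (-(2 * c * t)) := h3
      _ = V 0 * Real.exp (-(2 * c * t)) := by rw [h2]
  have hub2 : ∀ t, 0 ≤ t → (x t - y t) ^ 2 ≤ (V 0 / mE) * Real.exp (-(2 * c * t)) := by
    intro t ht
    have h1 := hVb t ht
    have h2 : (x t - y t) ^ 2 * mE ≤ V t := by
      simp only [hVdef]
      exact mul_le_mul_of_nonneg_left (hEl t) (sq_nonneg _)
    rw [div_mul_eq_mul_div, le_div_iff₀ hmE]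
    linarith
  -- conclude
  have hlim : Tendsto (fun t => (V 0 / mE) * Real.exp (-(2 * c * t))) atTop (nhds 0) := by
    have h1 : Tendsto (fun t : ℝ => 2 * c * t) atTop atTop :=
      Tendsto.const_mul_atTop (by positivity) tendsto_id
    have h2 : Tendsto (fun t : ℝ => Real.exp (-(2 * c * t))) atTop (nhds 0) :=
      Real.tendsto_exp_neg_atTop_nhds_zero.comp h1
    simpa using h2.const_mul (V 0 / mE)
  have hsq : Tendsto (fun t => (x t - y t) ^ 2) atTop (nhds 0) := by
    refine squeeze_zero' (Eventually.of_forall fun t => sq_nonneg _) ?_ hlim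
    filter_upwards [eventually_ge_atTop (0:ℝ)] with t ht using hub2 t ht
  have habs : Tendsto (fun t => |x t - y t|) atTop (nhds 0) := by
    have h := (Real.continuous_sqrt.tendsto 0).comp hsq
    simpa [Function.comp_def, Real.sqrt_sq_eq_abs] using h
  exact tendsto_zero_iff_norm_tendsto_zero.2 (by simpa [Real.norm_eq_abs] using habs)

theorem stmt_12 (p : ℝ) (hp : 0 < p) (a f g : ℝ → ℝ)
    (ha : Continuous a) (hf : Continuous f) (hg : ContDiff ℝ 1 g)
    (hg' : ∀ x : ℝ, 0 < deriv g x)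
    (hap : ∀ t, a (t + p) = a t) (hfp : ∀ t, f (t + p) = f t)
    (hina : ∫ s in (0:ℝ)..p, a s = 0)
    (y : ℝ → ℝ) (hy : ∀ t, HasDerivAt y (f t - a t * y t - g (y t)) t)
    (hyp : ∀ t, y (t + p) = y t) :
    (∀ x : ℝ → ℝ, (∀ t, HasDerivAt x (f t - a t * x t - g (x t)) t) →
      Tendsto (fun t => x t - y t) atTop (nhds 0)) ∧
    (∀ z : ℝ → ℝ, (∀ t, HasDerivAt z (f t - a t * z t - g (z t)) t) →
      (∀ t, z (t + p) = z t) → z = y) := by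
  have key : ∀ x : ℝ → ℝ, (∀ t, HasDerivAt x (f t - a t * x t - g (x t)) t) →
      Tendsto (fun t => x t - y t) atTop (nhds 0) :=
    fun x hx => aux_tendsto p hp a g f ha hg hg' hap hina y hy hyp x hx
  refine ⟨key, fun z hz hzp => ?_⟩
  have hlim := key z hz
  funext t
  have hper : ∀ n : ℕ, z (t + n * p) - y (t + n * p) = z t - y t := by
    intro n
    induction n with
    | zero => simp
    | succ n ih =>
      have h1 : t + ((n : ℝ) + 1) * p = (t + n * p) + p := by ring
      push_cast
      rw [h1, hzp, hyp, ih]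
  have hseq : Tendsto (fun n : ℕ => t + (n : ℝ) * p) atTop atTop := by
    apply tendsto_atTop_add_const_left
    exact Tendsto.atTop_mul_const hp tendsto_natCast_atTop_atTop
  have h2 := hlim.comp hseq
  have h3 : Tendsto (fun _ : ℕ => z t - y t) atTop (nhds 0) := by
    refine h2.congr fun n => ?_
    simp only [Function.comp]
    exact hper n
  have h4 : z t - y t = 0 := tendsto_nhds_unique tendsto_const_nhds h3
  linarith
end

section
/- (Discrete instability principle) Let X be a finite-dimensional real normed vector space, F : X → X continuous, and V : X → ℝ continuous with V(F(ξ)) > V(ξ) for all ξ ∈ X. Then for any ξ₀, the orbit ξ_{n+1} = F(ξ_n) satisfies ‖ξ_n‖ → ∞ as n → ∞. -/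
open Filter Topology

theorem stmt_13 (X : Type*) [NormedAddCommGroup X] [NormedSpace ℝ X]
    [FiniteDimensional ℝ X]
    (F : X → X) (hF : Continuous F) (V : X → ℝ) (hV : Continuous V)
    (hVF : ∀ ξ : X, V (F ξ) > V ξ) :
    ∀ ξ₀ : X, Tendsto (fun n : ℕ => ‖F^[n] ξ₀‖) atTop atTop := by
  intro ξ₀
  set a : ℕ → X := fun n => F^[n] ξ₀ with ha
  have hstep : ∀ n, a (n + 1) = F (a n) := by
    intro n; simp [ha, Function.iterate_succ_apply']
  have hmono : StrictMono (fun n => V (a n)) := by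
    apply strictMono_nat_of_lt_succ
    intro n
    rw [hstep]
    exact hVF (a n)
  by_contra hcon
  rw [tendsto_atTop] at hcon
  push_neg at hcon
  obtain ⟨b, hb⟩ := hcon
  have hfreq : ∃ᶠ n in atTop, a n ∈ Metric.closedBall (0 : X) b := by
    refine hb.mono fun n hn => ?_
    rw [Metric.mem_closedBall, dist_zero_right]
    exact hn.le
  obtain ⟨φ, hφ, hφmem⟩ := Filter.extraction_of_frequently_atTop hfreq
  obtain ⟨p, _, ψ, hψ, hlim⟩ :=
    (isCompact_closedBall (0 : X) b).tendsto_subseq hφmem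
  have hsub : StrictMono (φ ∘ ψ) := hφ.comp hψ
  have hVlim : Tendsto (fun k => V (a (φ (ψ k)))) atTop (𝓝 (V p)) :=
    (hV.continuousAt.tendsto).comp hlim
  -- every term of V∘a is ≤ V p
  have hle : ∀ n, V (a n) ≤ V p := by
    intro n
    have hk : ∃ k, n ≤ φ (ψ k) := ⟨n, (hsub.id_le n)⟩
    obtain ⟨k, hk⟩ := hk
    have h1 : V (a n) ≤ V (a (φ (ψ k))) := (hmono.monotone hk)
    refine h1.trans ?_
    have hmono2 : Monotone fun k => V (a (φ (ψ k))) :=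
      fun i j hij => hmono.monotone (hsub.monotone hij)
    exact hmono2.ge_of_tendsto hVlim k
  -- V(F p) ≤ V p by taking limits of the shifted subsequence
  have hFlim : Tendsto (fun k => a (φ (ψ k) + 1)) atTop (𝓝 (F p)) := by
    simp only [hstep]
    exact (hF.continuousAt.tendsto).comp hlim
  have hVFlim : Tendsto (fun k => V (a (φ (ψ k) + 1))) atTop (𝓝 (V (F p))) :=
    (hV.continuousAt.tendsto).comp hFlim
  have : V (F p) ≤ V p :=
    le_of_tendsto hVFlim (Eventually.of_forall fun k => hle _)
  exact absurd (hVF p) (not_lt.mpr this)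
end

section
/- Assume the homogeneous p-periodic system x' = A(t)x has a nontrivial p-periodic solution. Then the nonhomogeneous system x' = A(t)x + f(t) has a p-periodic solution if and only if ∫₀ᵖ ⟨f(t), z(t)⟩ dt = 0 for every p-periodic solution z of the adjoint system z' = -A(t)ᵀ z. -/
open Matrix intervalIntegral

open Set
open scoped NNReal

namespace Stmt16Aux

noncomputable def mvCLM {n : ℕ} (B : Matrix (Fin n) (Fin n) ℝ) : (Fin n → ℝ) →L[ℝ] (Fin n → ℝ) :=
  LinearMap.toContinuousLinearMap B.mulVecLin

@[simp] lemma mvCLM_apply {n : ℕ} (B : Matrix (Fin n) (Fin n) ℝ) (x : Fin n → ℝ) :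
    mvCLM B x = B *ᵥ x := rfl

noncomputable def mvL (n : ℕ) : Matrix (Fin n) (Fin n) ℝ →ₗ[ℝ] ((Fin n → ℝ) →L[ℝ] (Fin n → ℝ)) where
  toFun := mvCLM
  map_add' B C := by ext x i; simp [Matrix.add_mulVec]
  map_smul' c B := by ext x i; simp [Matrix.smul_mulVec]

lemma continuous_mvCLM (n : ℕ) : Continuous (fun B : Matrix (Fin n) (Fin n) ℝ => mvCLM B) :=
  (mvL n).continuous_of_finiteDimensional

lemma exists_bound {n : ℕ} {A : ℝ → Matrix (Fin n) (Fin n) ℝ} (hA : Continuous A)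
    {g : ℝ → Fin n → ℝ} (hg : Continuous g) (a b : ℝ) :
    ∃ K G : ℝ, 0 ≤ K ∧ 0 ≤ G ∧ (∀ t ∈ Icc a b, ‖mvCLM (A t)‖ ≤ K) ∧
      ∀ t ∈ Icc a b, ‖g t‖ ≤ G := by
  obtain ⟨K, hK⟩ := (isCompact_Icc (a := a) (b := b)).exists_bound_of_continuousOn
    (((continuous_mvCLM n).comp hA).continuousOn)
  obtain ⟨G, hG⟩ := (isCompact_Icc (a := a) (b := b)).exists_bound_of_continuousOn hg.continuousOn
  exact ⟨max K 0, max G 0, le_max_right _ _, le_max_right _ _,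
    fun t ht => le_trans (hK t ht) (le_max_left _ _),
    fun t ht => le_trans (hG t ht) (le_max_left _ _)⟩

/-- clamp -/
def cl (a b t : ℝ) : ℝ := max a (min t b)

lemma cl_mem {a b : ℝ} (hab : a ≤ b) (t : ℝ) : cl a b t ∈ Icc a b :=
  ⟨le_max_left _ _, max_le hab (min_le_right _ _)⟩

lemma cl_eq {a b t : ℝ} (ht : t ∈ Icc a b) : cl a b t = t := by
  have := ht.1; have := ht.2; unfold cl; rw [min_eq_left ht.2, max_eq_right ht.1]

lemma lipsOn {n : ℕ} (B : Matrix (Fin n) (Fin n) ℝ) (c : Fin n → ℝ) (K : ℝ≥0)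
    (hK : ‖mvCLM B‖ ≤ K) (s : Set (Fin n → ℝ)) :
    LipschitzOnWith K (fun x => B *ᵥ x + c) s := by
  have h1 : LipschitzWith K (fun x => mvCLM B x + c) :=
    LipschitzWith.of_dist_le_mul fun x y => by
      rw [dist_eq_norm, dist_eq_norm]
      have h2 : mvCLM B x + c - (mvCLM B y + c) = mvCLM B (x - y) := by
        rw [map_sub]; abel
      rw [h2]
      calc ‖mvCLM B (x-y)‖ ≤ ‖mvCLM B‖ * ‖x - y‖ := (mvCLM B).le_opNorm _
        _ ≤ K * ‖x - y‖ := by gcongr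
  simpa using h1.lipschitzOnWith (s := s)

lemma uniqOn {n : ℕ} {A : ℝ → Matrix (Fin n) (Fin n) ℝ} (hA : Continuous A)
    {g : ℝ → Fin n → ℝ} (hg : Continuous g) {a b t₀ : ℝ} (ht₀ : t₀ ∈ Ioo a b)
    {x y : ℝ → Fin n → ℝ}
    (hxc : ContinuousOn x (Icc a b)) (hyc : ContinuousOn y (Icc a b))
    (hx : ∀ t ∈ Ioo a b, HasDerivAt x (A t *ᵥ x t + g t) t)
    (hy : ∀ t ∈ Ioo a b, HasDerivAt y (A t *ᵥ y t + g t) t)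
    (hxy : x t₀ = y t₀) : EqOn x y (Icc a b) := by
  have hab : a ≤ b := le_of_lt (ht₀.1.trans ht₀.2)
  obtain ⟨K, G, hK0, hG0, hK, hG⟩ := exists_bound hA hg a b
  set v : ℝ → (Fin n → ℝ) → (Fin n → ℝ) := fun s x => A (cl a b s) *ᵥ x + g (cl a b s) with hv
  have hlip : ∀ s, LipschitzOnWith ⟨K, hK0⟩ (v s) univ := fun s =>
    lipsOn _ _ ⟨K, hK0⟩ (hK _ (cl_mem hab s)) _
  have key := ODE_solution_unique_of_mem_Icc (v := v) (s := fun _ => univ) (fun t _ => hlip t) ht₀ hxc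
    (fun t ht => by rw [hv]; simp only [cl_eq (Ioo_subset_Icc_self ht)]; exact hx t ht)
    (fun t _ => mem_univ _) hyc
    (fun t ht => by rw [hv]; simp only [cl_eq (Ioo_subset_Icc_self ht)]; exact hy t ht)
    (fun t _ => mem_univ _) hxy
  exact key

variable {n : ℕ}

lemma hdw_of_nmem_closure {x : ℝ → Fin n → ℝ} {v : Fin n → ℝ} {s : Set ℝ} {t : ℝ}
    (h : t ∉ closure s) : HasDerivWithinAt x v s t :=
  hasDerivWithinAt_iff_hasFDerivWithinAt.mpr (HasFDerivWithinAt.of_notMem_closure h)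

lemma glue {F : ℝ → (Fin n → ℝ) → (Fin n → ℝ)} {a c d : ℝ} (hac : a ≤ c) (hcd : c ≤ d)
    {x₁ x₂ : ℝ → Fin n → ℝ}
    (h₁ : ∀ t ∈ Icc a c, HasDerivWithinAt x₁ (F t (x₁ t)) (Icc a c) t)
    (h₂ : ∀ t ∈ Icc c d, HasDerivWithinAt x₂ (F t (x₂ t)) (Icc c d) t)
    (hj : x₁ c = x₂ c) :
    ∃ x : ℝ → Fin n → ℝ, (∀ t, t ≤ c → x t = x₁ t) ∧ (∀ t, c ≤ t → x t = x₂ t) ∧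
      ∀ t ∈ Icc a d, HasDerivWithinAt x (F t (x t)) (Icc a d) t := by
  classical
  refine ⟨fun t => if t ≤ c then x₁ t else x₂ t, fun t ht => if_pos ht, ?_, ?_⟩
  · intro t ht
    by_cases h : t ≤ c
    · simp only [if_pos h]; have : t = c := le_antisymm h ht; rw [this, hj]
    · simp only [if_neg h]
  · intro t ht
    set x : ℝ → Fin n → ℝ := fun t => if t ≤ c then x₁ t else x₂ t with hx
    have e₁ : ∀ s ∈ Icc a c, x s = x₁ s := fun s hs => if_pos hs.2
    have e₂ : ∀ s ∈ Icc c d, x s = x₂ s := by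
      intro s hs
      by_cases h : s ≤ c
      · have : s = c := le_antisymm h hs.1
        rw [hx]; simp only [this, if_pos le_rfl, hj]
      · exact if_neg h
    rw [← Icc_union_Icc_eq_Icc hac hcd]
    have H1 : HasDerivWithinAt x (F t (x t)) (Icc a c) t := by
      by_cases h : t ≤ c
      · have htm : t ∈ Icc a c := ⟨ht.1, h⟩
        have := (h₁ t htm).congr e₁ (e₁ t htm)
        rwa [e₁ t htm]
      · exact hdw_of_nmem_closure (by rw [closure_Icc]; exact fun hh => h hh.2)
    have H2 : HasDerivWithinAt x (F t (x t)) (Icc c d) t := by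
      by_cases h : c ≤ t
      · have htm : t ∈ Icc c d := ⟨h, ht.2⟩
        have := (h₂ t htm).congr e₂ (e₂ t htm)
        rwa [e₂ t htm]
      · exact hdw_of_nmem_closure (by rw [closure_Icc]; exact fun hh => h hh.1)
    exact H1.union H2



lemma hasDerivWithinAt_singleton {n : ℕ} (f : ℝ → Fin n → ℝ) (v : Fin n → ℝ) (x : ℝ) :
    HasDerivWithinAt f v {x} x := by
  rw [hasDerivWithinAt_iff_hasFDerivWithinAt, HasFDerivWithinAt, nhdsWithin_singleton,
    hasFDerivAtFilter_iff_isLittleO]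
  simp [Asymptotics.isLittleO_pure]

section exist
variable {n : ℕ} {A : ℝ → Matrix (Fin n) (Fin n) ℝ} {g : ℝ → Fin n → ℝ}

lemma step (hA : Continuous A) (hg : Continuous g) {a b c d K G : ℝ}
    (hK0 : 0 ≤ K) (hG0 : 0 ≤ G)
    (hK : ∀ t ∈ Icc a b, ‖mvCLM (A t)‖ ≤ K) (hG : ∀ t ∈ Icc a b, ‖g t‖ ≤ G)
    (hac : a ≤ c) (hcd : c ≤ d) (hdb : d ≤ b)
    (hstep : (d - c) * (2*K + G + 1) ≤ 1) (ξ : Fin n → ℝ) :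
    ∃ y : ℝ → Fin n → ℝ, y c = ξ ∧
      ∀ t ∈ Icc c d, HasDerivWithinAt y (A t *ᵥ y t + g t) (Icc c d) t := by
  have hsub : Icc c d ⊆ Icc a b := Icc_subset_Icc hac hdb
  have hpl : IsPicardLindelof (fun t x => A t *ᵥ x + g t) (tmin := c) (tmax := d)
      ⟨c, le_rfl, hcd⟩ ξ ⟨‖ξ‖ + 1, by positivity⟩ 0
      ⟨K * (2 * ‖ξ‖ + 1) + G, by positivity⟩ ⟨K, hK0⟩ := by
    constructor
    · intro t ht
      exact lipsOn _ _ ⟨K, hK0⟩ (hK t (hsub ht)) _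
    · intro x hx
      have : Continuous fun t => A t *ᵥ x + g t := by
        have h1 : Continuous fun t => mvCLM (A t) x :=
          ((ContinuousLinearMap.apply ℝ (Fin n → ℝ) x).continuous).comp
            ((continuous_mvCLM n).comp hA)
        exact h1.add hg
      exact this.continuousOn
    · intro t ht x hx
      have hxb : ‖x‖ ≤ 2 * ‖ξ‖ + 1 := by
        have := mem_closedBall_iff_norm.mp hx
        change ‖x - ξ‖ ≤ ‖ξ‖ + 1 at this
        have h2 := norm_le_norm_add_norm_sub' x ξ  -- ‖x‖ ≤ ‖ξ‖ + ‖x - ξ‖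
        nlinarith [norm_nonneg ξ]
      calc ‖A t *ᵥ x + g t‖ ≤ ‖A t *ᵥ x‖ + ‖g t‖ := norm_add_le _ _
        _ ≤ ‖mvCLM (A t)‖ * ‖x‖ + G := by
            gcongr
            · exact (mvCLM (A t)).le_opNorm x
            · exact hG t (hsub ht)
        _ ≤ K * (2 * ‖ξ‖ + 1) + G := by
            gcongr
            · exact hK t (hsub ht)
    · show (K * (2 * ‖ξ‖ + 1) + G) * max (d - c) (c - c) ≤ ‖ξ‖ + 1 - 0
      rw [sub_zero]
      have hmax : max (d - c) (c - c) = d - c := by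
        rw [sub_self]; exact max_eq_left (by linarith)
      rw [hmax]
      have h2 : (‖ξ‖+1) * ((d - c) * (2*K + G + 1)) ≤ (‖ξ‖+1) * 1 :=
        mul_le_mul_of_nonneg_left hstep (by positivity)
      nlinarith [sub_nonneg.mpr hcd, norm_nonneg ξ,
        mul_nonneg (sub_nonneg.mpr hcd) hK0, mul_nonneg (sub_nonneg.mpr hcd) hG0,
        mul_nonneg (mul_nonneg (sub_nonneg.mpr hcd) hG0) (norm_nonneg ξ),
        mul_nonneg (sub_nonneg.mpr hcd) (norm_nonneg ξ)]
  obtain ⟨y, hy0, hy⟩ := hpl.exists_eq_forall_mem_Icc_hasDerivWithinAt₀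
  exact ⟨y, hy0, hy⟩

lemma exist_Icc (hA : Continuous A) (hg : Continuous g) (a b : ℝ) (hab : a ≤ b)
    (ξ : Fin n → ℝ) :
    ∃ x : ℝ → Fin n → ℝ, x a = ξ ∧
      ∀ t ∈ Icc a b, HasDerivWithinAt x (A t *ᵥ x t + g t) (Icc a b) t := by
  obtain ⟨K, G, hK0, hG0, hK, hG⟩ := exists_bound hA hg a b
  set h : ℝ := (2*K + G + 1)⁻¹ with hh
  have hden : (0:ℝ) < 2*K + G + 1 := by linarith
  have hhpos : 0 < h := inv_pos.mpr hden
  have hmul : h * (2*K + G + 1) = 1 := inv_mul_cancel₀ (ne_of_gt hden)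
  have main : ∀ k : ℕ, ∃ x : ℝ → Fin n → ℝ, x a = ξ ∧
      ∀ t ∈ Icc a (min (a + k*h) b),
        HasDerivWithinAt x (A t *ᵥ x t + g t) (Icc a (min (a + k*h) b)) t := by
    intro k
    induction k with
    | zero =>
      refine ⟨fun _ => ξ, rfl, ?_⟩
      simp only [Nat.cast_zero, zero_mul, add_zero, min_eq_left hab, Icc_self]
      intro t ht
      rw [mem_singleton_iff] at ht
      subst ht
      exact hasDerivWithinAt_singleton _ _ _
    | succ k ih =>
      obtain ⟨xk, hxk0, hxk⟩ := ih
      simp only [Nat.cast_add, Nat.cast_one]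
      set c := min (a + k*h) b with hc
      set d := min (a + (k+1)*h) b with hd
      have hac : a ≤ c := le_min (le_add_of_nonneg_right (by positivity)) hab
      have hcd : c ≤ d := min_le_min (by push_cast; nlinarith) le_rfl
      have hdb : d ≤ b := min_le_right _ _
      have hdc : d - c ≤ h := by
        rcases le_total (a + k*h) b with h1 | h1
        · rw [hc, min_eq_left h1]
          have : d ≤ a + (k+1)*h := min_le_left _ _
          push_cast at this ⊢; nlinarith
        · rw [hc, min_eq_right h1, hd, min_eq_right (by push_cast; nlinarith)]
          simp [hhpos.le]
      obtain ⟨y, hy0, hy⟩ := step hA hg hK0 hG0 hK hG hac hcd hdb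
        (by calc (d - c) * (2*K + G + 1) ≤ h * (2*K + G + 1) := by gcongr
              _ = 1 := hmul) (xk c)
      obtain ⟨x, hxl, hxr, hx⟩ := glue (F := fun t x => A t *ᵥ x + g t) hac hcd hxk hy hy0.symm
      refine ⟨x, by rw [hxl a hac, hxk0], hx⟩
  obtain ⟨x, hx0, hx⟩ := main ⌈(b - a)/h⌉₊
  have hge : b ≤ a + ⌈(b - a)/h⌉₊ * h := by
    have h1 : (b - a)/h ≤ ⌈(b - a)/h⌉₊ := Nat.le_ceil _
    have := (div_le_iff₀ hhpos).mp h1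
    linarith
  rw [min_eq_right hge] at hx
  exact ⟨x, hx0, hx⟩

end exist

section global
variable {n : ℕ} {A : ℝ → Matrix (Fin n) (Fin n) ℝ} {g : ℝ → Fin n → ℝ}

/-- solution on `Icc (-m) m` with given value at 0 -/
lemma exist_sym (hA : Continuous A) (hg : Continuous g) (m : ℝ) (hm : 0 ≤ m) (ξ : Fin n → ℝ) :
    ∃ x : ℝ → Fin n → ℝ, x 0 = ξ ∧
      ∀ t ∈ Icc (-m) m, HasDerivWithinAt x (A t *ᵥ x t + g t) (Icc (-m) m) t := by
  -- forward solution on [0, m]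
  obtain ⟨xf, hxf0, hxf⟩ := exist_Icc hA hg 0 m hm ξ
  -- backward: solve reversed system on [0, m]
  have hA' : Continuous fun t => -A (-t) := (hA.comp continuous_neg).neg
  have hg' : Continuous fun t => -g (-t) := (hg.comp continuous_neg).neg
  obtain ⟨y, hy0, hy⟩ := exist_Icc hA' hg' 0 m hm ξ
  set xb : ℝ → Fin n → ℝ := fun t => y (-t) with hxb
  have hxb0 : xb 0 = ξ := by simp [hxb, hy0]
  have hxbD : ∀ t ∈ Icc (-m) 0, HasDerivWithinAt xb (A t *ᵥ xb t + g t) (Icc (-m) 0) t := by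
    intro t ht
    have hmt : -t ∈ Icc 0 m := ⟨by linarith [ht.2], by linarith [ht.1]⟩
    have hmap : MapsTo Neg.neg (Icc (-m) 0) (Icc 0 m) := fun s hs => ⟨by linarith [hs.2], by linarith [hs.1]⟩
    have := (hy (-t) hmt).scomp t (hasDerivAt_neg t).hasDerivWithinAt hmap
    simp only [neg_neg] at this
    refine this.congr_deriv ?_
    simp only [hxb, Matrix.neg_mulVec]
    module
  obtain ⟨x, hxl, hxr, hx⟩ := glue (F := fun t x => A t *ᵥ x + g t) (by linarith : -m ≤ 0) hm
    hxbD hxf (by rw [hxb0, hxf0])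
  exact ⟨x, by rw [hxl 0 le_rfl, hxb0], hx⟩

lemma exist_global (hA : Continuous A) (hg : Continuous g) (ξ : Fin n → ℝ) :
    ∃ x : ℝ → Fin n → ℝ, x 0 = ξ ∧ ∀ t, HasDerivAt x (A t *ᵥ x t + g t) t := by
  classical
  have hfam : ∀ m : ℕ, ∃ x : ℝ → Fin n → ℝ, x 0 = ξ ∧
      ∀ t ∈ Icc (-(m:ℝ)) m, HasDerivWithinAt x (A t *ᵥ x t + g t) (Icc (-(m:ℝ)) m) t :=
    fun m => exist_sym hA hg m m.cast_nonneg ξ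
  choose xfam h0 hD using hfam
  -- interior derivatives
  have hDi : ∀ m : ℕ, ∀ t ∈ Ioo (-(m:ℝ)) m, HasDerivAt (xfam m) (A t *ᵥ xfam m t + g t) t :=
    fun m t ht => (hD m t (Ioo_subset_Icc_self ht)).hasDerivAt (Icc_mem_nhds ht.1 ht.2)
  have hCont : ∀ m : ℕ, ContinuousOn (xfam m) (Icc (-(m:ℝ)) m) :=
    fun m t ht => (hD m t ht).continuousWithinAt
  -- agreement
  have hagree : ∀ m m' : ℕ, 1 ≤ m → m ≤ m' → EqOn (xfam m) (xfam m') (Icc (-(m:ℝ)) m) := by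
    intro m m' hm1 hmm'
    have hm0 : (0:ℝ) < m := by exact_mod_cast hm1
    have hle : (m:ℝ) ≤ m' := by exact_mod_cast hmm'
    have hsub : Icc (-(m:ℝ)) m ⊆ Icc (-(m':ℝ)) m' := Icc_subset_Icc (neg_le_neg hle) hle
    exact uniqOn hA hg (a := -(m:ℝ)) (b := m) ⟨by linarith, hm0⟩
      ((hCont m).mono le_rfl) ((hCont m').mono hsub)
      (fun t ht => hDi m t ht)
      (fun t ht => hDi m' t ⟨by have := ht.1; linarith, lt_of_lt_of_le ht.2 hle⟩)
      (by rw [h0 m, h0 m'])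
  -- global function
  set x : ℝ → Fin n → ℝ := fun t => xfam (⌊|t|⌋₊ + 1) t with hxdef
  have hx0 : x 0 = ξ := by
    simp only [hxdef, abs_zero, Nat.floor_zero]
    exact h0 1
  have hagree2 : ∀ m : ℕ, 1 ≤ m → ∀ s ∈ Icc (-(m:ℝ)) m, x s = xfam m s := by
    intro m hm1 s hs
    set ms := ⌊|s|⌋₊ + 1 with hms
    have hsms : s ∈ Icc (-(ms:ℝ)) ms := by
      have h1 : |s| < ms := by
        have := Nat.lt_floor_add_one |s|
        push_cast [hms]; push_cast at this; linarith
      constructor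
      · have := (abs_le.mp h1.le).1; linarith
      · exact (abs_le.mp h1.le).2
    have e1 := hagree ms (max m ms) (Nat.le_add_left 1 _) (le_max_right _ _) hsms
    have e2 := hagree m (max m ms) hm1 (le_max_left _ _) hs
    rw [hxdef]; dsimp only
    rw [← hms, e1 , e2]
  refine ⟨x, hx0, ?_⟩
  intro t
  set m := ⌊|t|⌋₊ + 1 with hm
  have hm1 : 1 ≤ m := Nat.le_add_left 1 _
  have htm : t ∈ Ioo (-(m:ℝ)) m := by
    have h1 : |t| < m := by
      have := Nat.lt_floor_add_one |t|
      push_cast [hm]; push_cast at this; linarith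
    exact ⟨by have := (abs_lt.mp h1).1; linarith, (abs_lt.mp h1).2⟩
  have hev : x =ᶠ[nhds t] xfam m := by
    filter_upwards [Ioo_mem_nhds htm.1 htm.2] with s hs
    exact hagree2 m hm1 s (Ioo_subset_Icc_self hs)
  have hxt : x t = xfam m t := hagree2 m hm1 t (Ioo_subset_Icc_self htm)
  have := (hDi m t htm).congr_of_eventuallyEq hev
  rwa [← hxt] at this

end global

section calc1
variable {n : ℕ} {A : ℝ → Matrix (Fin n) (Fin n) ℝ} {g : ℝ → Fin n → ℝ}

lemma uniq_global (hA : Continuous A) (hg : Continuous g) {x y : ℝ → Fin n → ℝ}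
    (hx : ∀ t, HasDerivAt x (A t *ᵥ x t + g t) t)
    (hy : ∀ t, HasDerivAt y (A t *ᵥ y t + g t) t)
    {t₀ : ℝ} (h : x t₀ = y t₀) : ∀ t, x t = y t := by
  intro t
  have hab1 : min t₀ t - 1 < t₀ := by have := min_le_left t₀ t; linarith
  have hab2 : t₀ < max t₀ t + 1 := by have := le_max_left t₀ t; linarith
  have htm : t ∈ Icc (min t₀ t - 1) (max t₀ t + 1) := by
    constructor
    · have := min_le_right t₀ t; linarith
    · have := le_max_right t₀ t; linarith
  exact uniqOn hA hg ⟨hab1, hab2⟩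
    ((Differentiable.continuous (fun s => (hx s).differentiableAt)).continuousOn)
    ((Differentiable.continuous (fun s => (hy s).differentiableAt)).continuousOn)
    (fun s _ => hx s) (fun s _ => hy s) h htm

lemma hasDerivAt_dot {x z : ℝ → Fin n → ℝ} {u v : Fin n → ℝ} {t : ℝ}
    (hx : HasDerivAt x u t) (hz : HasDerivAt z v t) :
    HasDerivAt (fun s => x s ⬝ᵥ z s) (u ⬝ᵥ z t + x t ⬝ᵥ v) t := by
  have h : ∀ i ∈ Finset.univ, HasDerivAt (fun s => x s i * z s i)
      (u i * z t i + x t i * v i) t :=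
    fun i _ => (hasDerivAt_pi.mp hx i).mul (hasDerivAt_pi.mp hz i)
  have hs := HasDerivAt.sum h
  simp only [dotProduct]
  convert hs using 1
  · rfl
  · rfl
  · ext s; simp [Finset.sum_apply]
  rw [Finset.sum_add_distrib]

lemma dot_transfer (B : Matrix (Fin n) (Fin n) ℝ) (x z : Fin n → ℝ) :
    (B *ᵥ x) ⬝ᵥ z = x ⬝ᵥ (Bᵀ *ᵥ z) := by
  rw [Matrix.dotProduct_mulVec, Matrix.vecMul_transpose]

lemma const_dot {x z : ℝ → Fin n → ℝ}
    (hx : ∀ t, HasDerivAt x (A t *ᵥ x t) t)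
    (hz : ∀ t, HasDerivAt z (-((A t)ᵀ *ᵥ z t)) t) (s t : ℝ) :
    x s ⬝ᵥ z s = x t ⬝ᵥ z t := by
  have hD : ∀ r : ℝ, HasDerivAt (fun q => x q ⬝ᵥ z q) 0 r := by
    intro r
    have h := hasDerivAt_dot (hx r) (hz r)
    convert h using 1
    rw [dot_transfer, dotProduct_neg]
    ring
  exact is_const_of_deriv_eq_zero (fun r => (hD r).differentiableAt) (fun r => (hD r).deriv) s t

lemma continuous_dot {z : ℝ → Fin n → ℝ} (hf : Continuous g) (hz : Continuous z) :
    Continuous fun t => g t ⬝ᵥ z t := by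
  simp only [dotProduct]
  exact continuous_finset_sum _ fun i _ =>
    ((continuous_apply i).comp hf).mul ((continuous_apply i).comp hz)

lemma key_ftc {x z : ℝ → Fin n → ℝ} (hf : Continuous g)
    (hx : ∀ t, HasDerivAt x (A t *ᵥ x t + g t) t)
    (hz : ∀ t, HasDerivAt z (-((A t)ᵀ *ᵥ z t)) t) (a b : ℝ) :
    ∫ t in a..b, g t ⬝ᵥ z t = x b ⬝ᵥ z b - x a ⬝ᵥ z a := by
  have hzc : Continuous z := Differentiable.continuous (fun s => (hz s).differentiableAt)
  apply intervalIntegral.integral_eq_sub_of_hasDerivAt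
  · intro t _
    have h := hasDerivAt_dot (hx t) (hz t)
    refine h.congr_deriv ?_
    rw [add_dotProduct, dot_transfer, dotProduct_neg]
    ring
  · exact (continuous_dot hf hzc).intervalIntegrable _ _

end calc1

section fredholm
open scoped RealInnerProductSpace

lemma fred {n : ℕ} (M M' : (Fin n → ℝ) →ₗ[ℝ] (Fin n → ℝ))
    (hMM' : ∀ ξ η, M ξ ⬝ᵥ M' η = ξ ⬝ᵥ η) (b : Fin n → ℝ) :
    (∃ ξ, ξ - M ξ = b) ↔ (∀ η, M' η = η → b ⬝ᵥ η = 0) := by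
  classical
  set e := WithLp.linearEquiv 2 ℝ (Fin n → ℝ) with he
  have hip : ∀ x y : EuclideanSpace ℝ (Fin n), ⟪x, y⟫ = (e x) ⬝ᵥ (e y) := by
    intro x y
    simp only [PiLp.inner_apply, RCLike.inner_apply, conj_trivial, dotProduct,
      WithLp.linearEquiv_apply]
    exact Finset.sum_congr rfl fun i _ => mul_comm _ _
  set Me : EuclideanSpace ℝ (Fin n) →ₗ[ℝ] EuclideanSpace ℝ (Fin n) :=
    e.symm.toLinearMap ∘ₗ M ∘ₗ e.toLinearMap with hMe
  set Me' : EuclideanSpace ℝ (Fin n) →ₗ[ℝ] EuclideanSpace ℝ (Fin n) :=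
    e.symm.toLinearMap ∘ₗ M' ∘ₗ e.toLinearMap with hMe'
  have heMe : ∀ x, e (Me x) = M (e x) := fun x => by simp [hMe]
  have heMe' : ∀ x, e (Me' x) = M' (e x) := fun x => by simp [hMe']
  have hinv : ∀ x y : EuclideanSpace ℝ (Fin n), ⟪Me x, Me' y⟫ = ⟪x, y⟫ := by
    intro x y; rw [hip, hip, heMe, heMe', hMM']
  constructor
  · rintro ⟨ξ, hξ⟩ η hη
    have : b ⬝ᵥ η = ξ ⬝ᵥ η - M ξ ⬝ᵥ η := by rw [← hξ, sub_dotProduct]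
    rw [this]
    nth_rewrite 2 [← hη]
    rw [hMM']
    ring
  · intro hb
    by_contra hne
    -- b ∉ range (1 - Me)
    set B : EuclideanSpace ℝ (Fin n) →ₗ[ℝ] EuclideanSpace ℝ (Fin n) := LinearMap.id - Me with hB
    set K := LinearMap.range B with hK
    set b' : EuclideanSpace ℝ (Fin n) := e.symm b with hb'
    have hbK : b' ∉ K := by
      intro hmem
      obtain ⟨ξ', hξ'⟩ := hmem
      apply hne
      refine ⟨e ξ', ?_⟩
      have := congrArg e hξ'
      simp only [hB, LinearMap.sub_apply, LinearMap.id_apply, map_sub] at this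
      rw [heMe] at this
      simpa [hb'] using this
    set pr : EuclideanSpace ℝ (Fin n) := ((K.orthogonalProjectionOnto b' : K) : EuclideanSpace ℝ (Fin n)) with hpr
    set η : EuclideanSpace ℝ (Fin n) := b' - pr with hη
    have hηK : η ∈ Kᗮ := K.sub_starProjection_mem_orthogonal b'
    have horto : ∀ ξ, ⟪B ξ, η⟫ = 0 := fun ξ =>
      (Submodule.mem_orthogonal K η).mp hηK _ (LinearMap.mem_range_self B ξ)
    have hMeq : ∀ ξ, ⟪Me ξ, η⟫ = ⟪ξ, η⟫ := by
      intro ξ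
      have h := horto ξ
      simp only [hB, LinearMap.sub_apply, LinearMap.id_apply, inner_sub_left] at h
      linarith
    have hinj : Function.Injective Me := by
      intro ξ ζ hξζ
      have h1 := hinv ξ (ξ - ζ)
      have h2 := hinv ζ (ξ - ζ)
      rw [hξζ] at h1
      have : ⟪ξ - ζ, ξ - ζ⟫ = 0 := by
        rw [inner_sub_left, ← h1, ← h2]; ring
      exact sub_eq_zero.mp (inner_self_eq_zero.mp this)
    have hsurj := (LinearMap.injective_iff_surjective).mp hinj
    have hfix : Me' η = η := by
      have hall : ∀ u, ⟪u, Me' η - η⟫ = 0 := by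
        intro u
        obtain ⟨ξ, rfl⟩ := hsurj u
        rw [inner_sub_right, hinv, hMeq]
        ring
      have := hall (Me' η - η)
      exact sub_eq_zero.mp (inner_self_eq_zero.mp this)
    have hfix' : M' (e η) = e η := by rw [← heMe', hfix]
    have hbη := hb (e η) hfix'
    have hbb : b ⬝ᵥ (e η) = ⟪b', η⟫ := by
      rw [hip]
      congr 1
    have hprη : ⟪pr, η⟫ = 0 :=
      (Submodule.mem_orthogonal K η).mp hηK _ (by exact (K.orthogonalProjectionOnto b').2)
    have hb'η : ⟪b', η⟫ = ⟪η, η⟫ := by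
      have : b' = pr + η := by rw [hη]; abel
      rw [this, inner_add_left, hprη, zero_add]
    have hη0 : η = 0 := by
      rw [hbη] at hbb
      exact inner_self_eq_zero.mp (by rw [← hb'η, ← hbb])
    apply hbK
    have : b' = pr := by rw [← sub_eq_zero, ← hη, hη0]
    rw [this]
    exact (K.orthogonalProjectionOnto b').2
end fredholm


section transfer
variable {n : ℕ} {A : ℝ → Matrix (Fin n) (Fin n) ℝ} {g : ℝ → Fin n → ℝ} {p : ℝ}

lemma transfer (hA : Continuous A) (hg : Continuous g)
    (hAp : ∀ t, A (t + p) = A t) (hgp : ∀ t, g (t + p) = g t)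
    {x : ℝ → Fin n → ℝ} (hx : ∀ t, HasDerivAt x (A t *ᵥ x t + g t) t)
    (hper : x p = x 0) : ∀ t, x (t + p) = x t := by
  have hy : ∀ t, HasDerivAt (fun s => x (s + p)) (A t *ᵥ x (t + p) + g t) t := by
    intro t
    have h1 := HasDerivAt.scomp t (hx (t + p)) ((hasDerivAt_id t).add_const p)
    simp only [one_smul] at h1
    rw [← hAp t, ← hgp t]
    exact h1
  exact uniq_global hA hg hy hx (t₀ := 0) (by simpa using hper)

lemma sumSol {x y : ℝ → Fin n → ℝ}
    (hx : ∀ t, HasDerivAt x (A t *ᵥ x t) t)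
    (hy : ∀ t, HasDerivAt y (A t *ᵥ y t + g t) t) :
    ∀ t, HasDerivAt (fun s => x s + y s) (A t *ᵥ (x t + y t) + g t) t := fun t => by
  have h := (hx t).add (hy t)
  refine h.congr_deriv ?_
  rw [Matrix.mulVec_add]
  abel

end transfer


end Stmt16Aux

open Stmt16Aux

theorem stmt_16 (n : ℕ) (p : ℝ) (hp : 0 < p)
    (A : ℝ → Matrix (Fin n) (Fin n) ℝ) (hA : Continuous A)
    (hAp : ∀ t, A (t + p) = A t)
    (f : ℝ → Fin n → ℝ) (hf : Continuous f) (hfp : ∀ t, f (t + p) = f t)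
    (hhom : ∃ x : ℝ → Fin n → ℝ, (∀ t, HasDerivAt x (A t *ᵥ x t) t) ∧
      (∀ t, x (t + p) = x t) ∧ x ≠ 0) :
    (∃ x : ℝ → Fin n → ℝ, (∀ t, HasDerivAt x (A t *ᵥ x t + f t) t) ∧
      ∀ t, x (t + p) = x t) ↔
    (∀ z : ℝ → Fin n → ℝ, (∀ t, HasDerivAt z (-((A t)ᵀ *ᵥ z t)) t) →
      (∀ t, z (t + p) = z t) → ∫ t in (0:ℝ)..p, f t ⬝ᵥ z t = 0) := by
  classical
  have hAT : Continuous fun t => -(A t)ᵀ := by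
    have h1 : Continuous fun t => (A t)ᵀ := hA.matrix_transpose
    exact h1.neg
  have hATp : ∀ t, -(A (t + p))ᵀ = -(A t)ᵀ := fun t => by rw [hAp]
  have h0c : Continuous fun _ : ℝ => (0 : Fin n → ℝ) := continuous_const
  -- homogeneous solutions
  have hexh : ∀ ξ : Fin n → ℝ, ∃ x : ℝ → Fin n → ℝ, x 0 = ξ ∧
      ∀ t, HasDerivAt x (A t *ᵥ x t) t := by
    intro ξ
    obtain ⟨x, h0, hD⟩ := exist_global hA h0c ξ
    exact ⟨x, h0, fun t => by simpa using hD t⟩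
  choose hom hom0 homD using hexh
  -- adjoint solutions
  have hexa : ∀ η : Fin n → ℝ, ∃ z : ℝ → Fin n → ℝ, z 0 = η ∧
      ∀ t, HasDerivAt z (-((A t)ᵀ *ᵥ z t)) t := by
    intro η
    obtain ⟨z, h0, hD⟩ := exist_global hAT h0c η
    refine ⟨z, h0, fun t => ?_⟩
    have := hD t
    simpa [Matrix.neg_mulVec] using this
  choose adj adj0 adjD using hexa
  obtain ⟨w, w0, wD⟩ := exist_global hA hf (0 : Fin n → ℝ)
  -- uniqueness wrappers
  have uA : ∀ {x y : ℝ → Fin n → ℝ}, (∀ t, HasDerivAt x (A t *ᵥ x t) t) →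
      (∀ t, HasDerivAt y (A t *ᵥ y t) t) → x 0 = y 0 → ∀ t, x t = y t :=
    fun hx hy h => uniq_global hA h0c (fun t => by simpa using hx t)
      (fun t => by simpa using hy t) h
  have uAdj : ∀ {x y : ℝ → Fin n → ℝ}, (∀ t, HasDerivAt x (-((A t)ᵀ *ᵥ x t)) t) →
      (∀ t, HasDerivAt y (-((A t)ᵀ *ᵥ y t)) t) → x 0 = y 0 → ∀ t, x t = y t :=
    fun hx hy h => uniq_global hAT h0c
      (fun t => by simpa [Matrix.neg_mulVec] using hx t)
      (fun t => by simpa [Matrix.neg_mulVec] using hy t) h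
  -- monodromy maps
  have hadd : ∀ ξ ζ t, hom (ξ + ζ) t = hom ξ t + hom ζ t := by
    intro ξ ζ
    refine uA (homD _) (fun t => ?_) (by rw [hom0, hom0, hom0])
    have h := (homD ξ t).add (homD ζ t)
    refine h.congr_deriv ?_
    rw [Matrix.mulVec_add]
  have hsmul : ∀ (c : ℝ) ξ t, hom (c • ξ) t = c • hom ξ t := by
    intro c ξ
    refine uA (homD _) (fun t => ?_) (by rw [hom0, hom0])
    have h := (homD ξ t).const_smul c
    refine h.congr_deriv ?_
    rw [Matrix.mulVec_smul]
  have hadd' : ∀ ξ ζ t, adj (ξ + ζ) t = adj ξ t + adj ζ t := by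
    intro ξ ζ
    refine uAdj (adjD _) (fun t => ?_) (by rw [adj0, adj0, adj0])
    have h := (adjD ξ t).add (adjD ζ t)
    refine h.congr_deriv ?_
    rw [Matrix.mulVec_add]
    abel
  have hsmul' : ∀ (c : ℝ) ξ t, adj (c • ξ) t = c • adj ξ t := by
    intro c ξ
    refine uAdj (adjD _) (fun t => ?_) (by rw [adj0, adj0])
    have h := (adjD ξ t).const_smul c
    refine h.congr_deriv ?_
    rw [Matrix.mulVec_smul]
    module
  set M : (Fin n → ℝ) →ₗ[ℝ] (Fin n → ℝ) :=
    { toFun := fun ξ => hom ξ p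
      map_add' := fun ξ ζ => hadd ξ ζ p
      map_smul' := fun c ξ => hsmul c ξ p } with hM
  set M' : (Fin n → ℝ) →ₗ[ℝ] (Fin n → ℝ) :=
    { toFun := fun η => adj η p
      map_add' := fun ξ ζ => hadd' ξ ζ p
      map_smul' := fun c ξ => hsmul' c ξ p } with hM'
  have hinv : ∀ ξ η, M ξ ⬝ᵥ M' η = ξ ⬝ᵥ η := by
    intro ξ η
    have h := const_dot (homD ξ) (adjD η) p 0
    rw [hom0, adj0] at h
    exact h
  -- decomposition of nonhomogeneous solutions
  have decomp : ∀ {x : ℝ → Fin n → ℝ}, (∀ t, HasDerivAt x (A t *ᵥ x t + f t) t) →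
      ∀ t, x t = hom (x 0) t + w t := by
    intro x hx
    exact uniq_global hA hf hx (sumSol (homD (x 0)) wD) (t₀ := 0)
      (by rw [hom0, w0, add_zero])
  constructor
  · -- easy direction
    rintro ⟨x, hx, hxper⟩ z hz hzper
    rw [key_ftc hf hx hz 0 p]
    have h1 : x p = x 0 := by simpa using hxper 0
    have h2 : z p = z 0 := by simpa using hzper 0
    rw [h1, h2]
    ring
  · intro hint
    have hcond : ∀ η, M' η = η → (w p) ⬝ᵥ η = 0 := by
      intro η hη
      have hηp : adj η p = adj η 0 := by rw [adj0]; exact hη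
      have hzper : ∀ t, adj η (t + p) = adj η t := by
        refine transfer hAT h0c hATp (fun _ => rfl) (x := adj η)
          (fun t => by simpa [Matrix.neg_mulVec] using adjD η t) hηp
      have hi := hint (adj η) (adjD η) hzper
      rw [key_ftc hf wD (adjD η) 0 p, w0] at hi
      simp only [zero_dotProduct, sub_zero] at hi
      rwa [show adj η p = η from hη] at hi
    obtain ⟨ξ, hξ⟩ := (fred M M' hinv (w p)).mpr hcond
    refine ⟨fun t => hom ξ t + w t, sumSol (homD ξ) wD, ?_⟩
    refine transfer hA hf hAp hfp (sumSol (homD ξ) wD) ?_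
    have : hom ξ p = M ξ := rfl
    rw [this, hom0, w0, add_zero, ← hξ]
    abel
end

section
/- Let B(t) be a continuous n×n matrix-valued function whose off-diagonal entries are positive for all t > 0, and let e_i be the i-th standard basis vector. Then the solution of y' = B(t)y with y(0) = e_i satisfies y_j(t) > 0 for all t > 0 and all j. -/
open Matrix Set Filter

theorem stmt_17 (n : ℕ) (hn : 2 ≤ n)
    (B : ℝ → Matrix (Fin n) (Fin n) ℝ) (hB : Continuous B)
    (hoff : ∀ t > (0:ℝ), ∀ j k : Fin n, j ≠ k → 0 < B t j k)
    (i : Fin n)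
    (y : ℝ → Fin n → ℝ) (hy : ∀ t, HasDerivAt y (B t *ᵥ y t) t)
    (hy0 : y 0 = Pi.single i 1) :
    ∀ t > (0:ℝ), ∀ j : Fin n, 0 < y t j := by
  have hyj : ∀ t (j : Fin n), HasDerivAt (fun s => y s j) ((B t *ᵥ y t) j) t :=
    fun t j => hasDerivAt_pi.1 (hy t) j
  have hycont : ∀ j : Fin n, Continuous fun s => y s j := fun j =>
    continuous_iff_continuousAt.2 fun t => (hyj t j).continuousAt
  have hBc : ∀ j k : Fin n, Continuous fun t => B t j k := fun j k =>
    (continuous_apply k).comp ((continuous_apply j).comp hB)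
  have hoff0 : ∀ t, 0 ≤ t → ∀ j k : Fin n, j ≠ k → 0 ≤ B t j k := by
    intro t ht j k hjk
    rcases ht.lt_or_eq with h | h
    · exact (hoff t h j k hjk).le
    · rw [← h]
      have htd : Tendsto (fun s => B s j k) (nhdsWithin 0 (Ioi 0)) (nhds (B 0 j k)) :=
        ((hBc j k).tendsto 0).mono_left nhdsWithin_le_nhds
      refine ge_of_tendsto htd ?_
      filter_upwards [self_mem_nhdsWithin] with s hs
      exact (hoff s hs j k hjk).le
  have hy0n : ∀ j, 0 ≤ y 0 j := by
    intro j; rw [hy0]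
    rcases eq_or_ne j i with rfl | hne
    · simp
    · simp [Pi.single_apply, hne]
  -- mulVec as a sum
  have hmv : ∀ t (j : Fin n), (B t *ᵥ y t) j = ∑ k, B t j k * y t k := by
    intro t j; simp [Matrix.mulVec, dotProduct]
  -- Step 1: nonnegativity of all components for t ≥ 0
  have nn : ∀ t, 0 ≤ t → ∀ j, 0 ≤ y t j := by
    intro t₀ ht₀ j₀
    rcases ht₀.lt_or_eq with h | h
    swap
    · exact h ▸ hy0n j₀
    have hg : Continuous fun s => ∑ j, ∑ k, |B s j k| :=
      continuous_finset_sum _ fun j _ => continuous_finset_sum _ fun k _ => (hBc j k).abs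
    obtain ⟨K₀, hK₀'⟩ := (isCompact_Icc (a := (0:ℝ)) (b := t₀)).exists_bound_of_continuousOn
      hg.continuousOn
    have hK₀ : ∀ s ∈ Icc (0:ℝ) t₀, (∑ j, ∑ k, |B s j k|) ≤ K₀ := by
      intro s hs
      have := hK₀' s hs
      rw [Real.norm_eq_abs] at this
      exact (le_abs_self _).trans this
    set K : ℝ := K₀ + 1 with hKdef
    have hK₀0 : 0 ≤ K₀ := by
      have := hK₀' 0 (left_mem_Icc.2 h.le)
      exact (norm_nonneg _).trans this
    -- key claim: perturbed solution stays positive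
    have key : ∀ ε, 0 < ε → ∀ s ∈ Icc (0:ℝ) t₀, ∀ j, 0 < y s j + ε * Real.exp (K * s) := by
      intro ε hε
      by_contra hcon
      push_neg at hcon
      obtain ⟨s₁, hs₁, j₁, hj₁⟩ := hcon
      set w : ℝ → Fin n → ℝ := fun s j => y s j + ε * Real.exp (K * s) with hw
      have hwc : ∀ j, Continuous fun s => w s j := fun j =>
        (hycont j).add (continuous_const.mul ((continuous_const.mul continuous_id).rexp))
      set S : Set ℝ := {s | s ∈ Icc (0:ℝ) t₀ ∧ ∃ j, w s j ≤ 0} with hSdef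
      have hSclosed : IsClosed S := by
        have : S = Icc (0:ℝ) t₀ ∩ ⋃ j, {s | w s j ≤ 0} := by
          ext s
          simp only [hSdef, Set.mem_setOf_eq, Set.mem_inter_iff, Set.mem_iUnion]
        rw [this]
        exact isClosed_Icc.inter
          (isClosed_iUnion_of_finite fun j => isClosed_le (hwc j) continuous_const)
      have hSne : S.Nonempty := ⟨s₁, hs₁, j₁, hj₁⟩
      have hSbdd : BddBelow S := ⟨0, fun s hs => hs.1.1⟩
      set τ := sInf S with hτdef
      have hτS : τ ∈ S := hSclosed.csInf_mem hSne hSbdd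
      have hw0 : ∀ k, 0 < w 0 k := by
        intro k
        have : (0:ℝ) < ε * Real.exp (K * 0) := by positivity
        have h2 := hy0n k
        simp only [hw]
        linarith
      have hτ0 : 0 < τ := by
        rcases (hτS.1.1).lt_or_eq with h' | h'
        · exact h'
        · exfalso
          obtain ⟨k, hk⟩ := hτS.2
          rw [← h'] at hk
          exact absurd hk (not_le.2 (hw0 k))
      have hlt : ∀ s, 0 ≤ s → s < τ → ∀ k, 0 < w s k := by
        intro s hs0 hsτ k
        by_contra hc
        push_neg at hc
        have hsS : s ∈ S := ⟨⟨hs0, hsτ.le.trans hτS.1.2⟩, k, hc⟩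
        exact absurd (csInf_le hSbdd hsS) (not_le.2 hsτ)
      have hτnonneg : ∀ k, 0 ≤ w τ k := by
        intro k
        have htd : Tendsto (fun s => w s k) (nhdsWithin τ (Iio τ)) (nhds (w τ k)) :=
          ((hwc k).tendsto τ).mono_left nhdsWithin_le_nhds
        refine ge_of_tendsto htd ?_
        filter_upwards [Ioo_mem_nhdsLT_of_mem (show τ ∈ Ioc 0 τ from ⟨hτ0, le_refl τ⟩)]
          with s hs
        exact (hlt s hs.1.le hs.2 k).le
      obtain ⟨j, hj⟩ := hτS.2
      have hwτj : w τ j = 0 := le_antisymm hj (hτnonneg j)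
      have hyτj : y τ j = -(ε * Real.exp (K * τ)) := by
        simp only [hw] at hwτj; linarith
      have hexp : HasDerivAt (fun s : ℝ => Real.exp (K * s)) (Real.exp (K * τ) * K) τ := by
        simpa using (((hasDerivAt_id τ).const_mul K)).exp
      have hd : HasDerivAt (fun s => w s j)
          ((B τ *ᵥ y τ) j + ε * (Real.exp (K * τ) * K)) τ :=
        (hyj τ j).add (hexp.const_mul ε)
      have hepos : (0:ℝ) < Real.exp (K * τ) := Real.exp_pos _
      -- lower bound the derivative
      have hsumabs : ∑ k, |B τ j k| ≤ K₀ := by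
        calc ∑ k, |B τ j k| ≤ ∑ j', ∑ k, |B τ j' k| :=
              Finset.single_le_sum (f := fun j' => ∑ k, |B τ j' k|)
                (fun j' _ => Finset.sum_nonneg fun k _ => abs_nonneg _) (Finset.mem_univ j)
          _ ≤ K₀ := hK₀ τ hτS.1
      have hterm : ∀ k, -(|B τ j k| * (ε * Real.exp (K * τ))) ≤ B τ j k * y τ k := by
        intro k
        have hyk : -(ε * Real.exp (K * τ)) ≤ y τ k := by
          have := hτnonneg k
          simp only [hw] at this; linarith
        rcases eq_or_ne k j with rfl | hkj
        · rw [hyτj]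
          have h1 : B τ k k * (ε * Real.exp (K * τ)) ≤ |B τ k k| * (ε * Real.exp (K * τ)) :=
            mul_le_mul_of_nonneg_right (le_abs_self _) (mul_pos hε hepos).le
          linarith
        · have hBk : 0 ≤ B τ j k := (hoff τ hτ0 j k (Ne.symm hkj)).le
          have h1 := mul_le_mul_of_nonneg_left hyk hBk
          have h2 : B τ j k ≤ |B τ j k| := le_abs_self _
          nlinarith [mul_pos hε hepos]
      have hmvlow : -(K₀ * (ε * Real.exp (K * τ))) ≤ (B τ *ᵥ y τ) j := by
        rw [hmv]
        have h1 : ∑ k, -(|B τ j k| * (ε * Real.exp (K * τ))) ≤ ∑ k, B τ j k * y τ k :=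
          Finset.sum_le_sum fun k _ => hterm k
        have h2 : ∑ k, -(|B τ j k| * (ε * Real.exp (K * τ)))
            = -((∑ k, |B τ j k|) * (ε * Real.exp (K * τ))) := by
          rw [Finset.sum_neg_distrib, Finset.sum_mul]
        rw [h2] at h1
        have h3 : (∑ k, |B τ j k|) * (ε * Real.exp (K * τ)) ≤ K₀ * (ε * Real.exp (K * τ)) :=
          mul_le_mul_of_nonneg_right hsumabs (by positivity)
        linarith
      have hdpos : 0 < (B τ *ᵥ y τ) j + ε * (Real.exp (K * τ) * K) := by
        have : ε * (Real.exp (K * τ) * K) = K * (ε * Real.exp (K * τ)) := by ring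
        rw [this, hKdef]
        nlinarith [mul_pos hε hepos]
      -- contradiction with left limit
      have hslope := hasDerivAt_iff_tendsto_slope.1 hd
      have hslope' : Tendsto (slope (fun s => w s j) τ) (nhdsWithin τ (Iio τ))
          (nhds ((B τ *ᵥ y τ) j + ε * (Real.exp (K * τ) * K))) :=
        hslope.mono_left (nhdsWithin_mono τ fun s hs => ne_of_lt hs)
      have hev : ∀ᶠ s in nhdsWithin τ (Iio τ), 0 < slope (fun s => w s j) τ s :=
        hslope'.eventually (eventually_gt_nhds hdpos)
      have hev2 : ∀ᶠ s in nhdsWithin τ (Iio τ), s ∈ Ioo (0:ℝ) τ :=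
        eventually_of_mem (Ioo_mem_nhdsLT_of_mem ⟨hτ0, le_refl τ⟩) fun s hs => hs
      obtain ⟨s, hs1, hs2⟩ := (hev.and hev2).exists
      have hws : 0 < w s j := hlt s hs2.1.le hs2.2 j
      have : slope (fun s => w s j) τ s < 0 := by
        rw [slope_def_field, hwτj, sub_zero]
        exact div_neg_of_pos_of_neg hws (by linarith [hs2.2])
      linarith
    -- conclude nonnegativity
    by_contra hneg
    push_neg at hneg
    set c := Real.exp (K * t₀) with hc
    have hcpos : 0 < c := Real.exp_pos _
    have hεpos : 0 < -(y t₀ j₀) / (2 * c) := div_pos (by linarith) (by positivity)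
    have hkey := key _ hεpos t₀ (right_mem_Icc.2 h.le) j₀
    have h2 : -(y t₀ j₀) / (2 * c) * Real.exp (K * t₀) = -(y t₀ j₀) / 2 := by
      rw [← hc]; field_simp
    rw [h2] at hkey
    linarith
  -- Step 2: strict positivity via gauge transformation
  set F : Fin n → ℝ → ℝ := fun j s => ∫ r in (0:ℝ)..s, B r j j with hFdef
  have hF : ∀ (j : Fin n) s, HasDerivAt (F j) (B s j j) s := by
    intro j s
    exact intervalIntegral.integral_hasDerivAt_right ((hBc j j).intervalIntegrable 0 s)
      ((hBc j j).stronglyMeasurable.stronglyMeasurableAtFilter) (hBc j j).continuousAt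
  have hFc : ∀ j : Fin n, Continuous (F j) := fun j =>
    continuous_iff_continuousAt.2 fun s => (hF j s).continuousAt
  set u : Fin n → ℝ → ℝ := fun j s => y s j * Real.exp (-(F j s)) with hudef
  have hucont : ∀ j : Fin n, Continuous (u j) := fun j =>
    (hycont j).mul (Real.continuous_exp.comp (hFc j).neg)
  have hu : ∀ (j : Fin n) s, HasDerivAt (u j)
      ((∑ k ∈ Finset.univ.erase j, B s j k * y s k) * Real.exp (-(F j s))) s := by
    intro j s
    have h1 : HasDerivAt (fun s => Real.exp (-(F j s)))
        (Real.exp (-(F j s)) * -(B s j j)) s := ((hF j s).neg).exp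
    have h2 := (hyj s j).mul h1
    refine h2.congr_deriv ?_
    rw [hmv]
    rw [show (∑ k, B s j k * y s k)
        = B s j j * y s j + ∑ k ∈ Finset.univ.erase j, B s j k * y s k from
      (Finset.add_sum_erase _ _ (Finset.mem_univ j)).symm]
    ring
  have hyeq : ∀ (j : Fin n) s, y s j = u j s * Real.exp (F j s) := by
    intro j s
    simp only [hudef]
    rw [mul_assoc, ← Real.exp_add]
    simp
  have hF0 : ∀ j : Fin n, F j 0 = 0 := by
    intro j; simp [hFdef]
  have hui0 : u i 0 = 1 := by
    simp [hudef, hF0, hy0]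
  intro t ht
  -- positivity of the i-th component on [0, t]
  have hipos : ∀ s ∈ Icc (0:ℝ) t, 0 < y s i := by
    have hmono : MonotoneOn (u i) (Icc 0 t) := by
      refine monotoneOn_of_hasDerivWithinAt_nonneg (convex_Icc 0 t)
        (hucont i).continuousOn
        (fun x hx => (hu i x).hasDerivWithinAt) ?_
      intro x hx
      rw [interior_Icc] at hx
      refine mul_nonneg (Finset.sum_nonneg fun k hk => ?_) (Real.exp_pos _).le
      have hki : k ≠ i := Finset.ne_of_mem_erase hk
      exact mul_nonneg (hoff x hx.1 i k (Ne.symm hki)).le (nn x hx.1.le k)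
    intro s hs
    have h1 : u i 0 ≤ u i s := hmono (left_mem_Icc.2 (hs.1.trans hs.2)) hs hs.1
    rw [hui0] at h1
    rw [hyeq i s]
    have := Real.exp_pos (F i s)
    nlinarith
  intro j
  rcases eq_or_ne j i with rfl | hji
  · exact hipos t (right_mem_Icc.2 ht.le)
  · have hstrict : StrictMonoOn (u j) (Icc 0 t) := by
      refine strictMonoOn_of_hasDerivWithinAt_pos (convex_Icc 0 t)
        (hucont j).continuousOn
        (fun x hx => (hu j x).hasDerivWithinAt) ?_
      intro x hx
      rw [interior_Icc] at hx
      refine mul_pos (Finset.sum_pos' (fun k hk => ?_) ⟨i, ?_, ?_⟩) (Real.exp_pos _)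
      · have hkj : k ≠ j := Finset.ne_of_mem_erase hk
        exact mul_nonneg (hoff x hx.1 j k (Ne.symm hkj)).le (nn x hx.1.le k)
      · exact Finset.mem_erase.2 ⟨Ne.symm hji, Finset.mem_univ i⟩
      · exact mul_pos (hoff x hx.1 j i hji) (hipos x ⟨hx.1.le, hx.2.le⟩)
    have h1 : u j 0 < u j t :=
      hstrict (left_mem_Icc.2 ht.le) (right_mem_Icc.2 ht.le) ht
    have h0 : u j 0 = 0 := by
      simp [hudef, hy0, Pi.single_apply, hji]
    rw [h0] at h1
    rw [hyeq j t]
    exact mul_pos h1 (Real.exp_pos _)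
end

section
/- Let h : ℝ → ℝ be continuous and p-periodic, μ ∈ ℝ. If w : ℝ → ℝ is differentiable, p-periodic, has zero average ∫₀ᵖ w = 0, and satisfies w'(t) + h(t)w(t) = μ for all t, then μ = 0 and w ≡ 0. -/
open intervalIntegral

theorem stmt_19 (p : ℝ) (hp : 0 < p) (h : ℝ → ℝ) (hh : Continuous h)
    (hhp : ∀ t, h (t + p) = h t) (μ : ℝ)
    (w : ℝ → ℝ) (hw : ∀ t, HasDerivAt w (μ - h t * w t) t)
    (hwp : ∀ t, w (t + p) = w t) (hwavg : ∫ t in (0:ℝ)..p, w t = 0) :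
    μ = 0 ∧ ∀ t, w t = 0 := by
  have hwc : Continuous w := by
    rw [continuous_iff_continuousAt]
    exact fun t => (hw t).continuousAt
  set H : ℝ → ℝ := fun t => ∫ s in (0:ℝ)..t, h s with hHdef
  have hHd : ∀ t, HasDerivAt H (h t) t := fun t =>
    intervalIntegral.integral_hasDerivAt_right (hh.intervalIntegrable _ _)
      (hh.stronglyMeasurable.stronglyMeasurableAtFilter) hh.continuousAt
  set g : ℝ → ℝ := fun t => Real.exp (H t) * w t with hgdef
  have hgd : ∀ t, HasDerivAt g (μ * Real.exp (H t)) t := by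
    intro t
    have := ((hHd t).exp.mul (hw t))
    exact this.congr_deriv (by ring)
  -- w has a zero
  obtain ⟨t₀, ht₀⟩ : ∃ t₀, w t₀ = 0 := by
    by_contra hne
    push_neg at hne
    replace hne : ∀ t, w t ≠ 0 := hne
    rcases lt_or_gt_of_ne (hne 0) with h0 | h0
    · -- w 0 < 0, show w < 0 on Ioo 0 p, integral of -w positive
      have key : ∀ x ∈ Set.Ioo 0 p, 0 < -w x := by
        intro x hx
        by_contra hle
        have hwx : 0 < w x := lt_of_le_of_ne (by linarith [not_lt.mp hle]) (hne x).symm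
        have : (0:ℝ) ∈ Set.Icc (w 0) (w x) := ⟨le_of_lt h0, le_of_lt hwx⟩
        obtain ⟨c, _, hc⟩ := intermediate_value_Icc (le_of_lt hx.1) (hwc.continuousOn) this
        exact hne c hc
      have hpos := intervalIntegral.intervalIntegral_pos_of_pos_on
        ((hwc.neg).intervalIntegrable 0 p) key hp
      simp only [Pi.neg_apply] at hpos
      rw [intervalIntegral.integral_neg, hwavg] at hpos
      simp at hpos
    · -- w 0 > 0
      have key : ∀ x ∈ Set.Ioo 0 p, 0 < w x := by
        intro x hx
        by_contra hle
        have hwx : w x < 0 := lt_of_le_of_ne (not_lt.mp hle) (hne x)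
        have : (0:ℝ) ∈ Set.Icc (w x) (w 0) := ⟨le_of_lt hwx, le_of_lt h0⟩
        obtain ⟨c, _, hc⟩ := intermediate_value_Icc' (le_of_lt hx.1) (hwc.continuousOn) this
        exact hne c hc
      have hpos := intervalIntegral.intervalIntegral_pos_of_pos_on
        (hwc.intervalIntegrable 0 p) key hp
      rw [hwavg] at hpos
      exact lt_irrefl _ hpos
  have hg0 : g t₀ = 0 := by simp [hgdef, ht₀]
  have hgp : g (t₀ + p) = 0 := by simp [hgdef, hwp, ht₀]
  have hμ : μ = 0 := by
    by_contra hμ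
    have hinj : Function.Injective g := by
      rcases (lt_or_gt_of_ne hμ) with hlt | hlt
      · refine (strictAnti_of_deriv_neg fun x => ?_).injective
        rw [(hgd x).deriv]
        exact mul_neg_of_neg_of_pos hlt (Real.exp_pos _)
      · refine (strictMono_of_deriv_pos fun x => ?_).injective
        rw [(hgd x).deriv]
        exact mul_pos hlt (Real.exp_pos _)
    have := hinj (hgp.trans hg0.symm)
    linarith
  refine ⟨hμ, fun t => ?_⟩
  have hconst : g t = g t₀ := by
    apply is_const_of_deriv_eq_zero
    · exact fun x => (hgd x).differentiableAt
    · intro x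
      rw [(hgd x).deriv, hμ, zero_mul]
  rw [hg0] at hconst
  have := mul_eq_zero.mp hconst
  rcases this with h1 | h1
  · exact absurd h1 (Real.exp_ne_zero _)
  · exact h1
end
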